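/- arXiv:1409.5291 — 4 statements merged into one kernel-verified Lean document; each statement's English description precedes it below -/
import Mathlib

section
/- Let P = N_k(μ_P, Φ_P⁻¹) and Q = N_k(μ_Q, Φ_Q⁻¹) be multivariate normal distributions on ℝ^k with symmetric positive-definite precision matrices Φ_P, Φ_Q. Then the Hyvärinen discrepancy D_H(P,Q) = ∫ ‖∇ log p(x) − ∇ log q(x)‖² p(x) dx equals tr(Φ_P − 2Φ_Q + Φ_P⁻¹ Φ_Q²) + ‖Φ_Q(μ_P − μ_Q)‖². -/
open Real Matrix MeasureTheory Filter Set
open scoped MatrixOrder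


lemma gauss0 : ∫ t : ℝ, Real.exp (-t ^ 2 / 2) = Real.sqrt (2 * Real.pi) := by
  have h := integral_gaussian (1/2 : ℝ)
  simp only [show ∀ t : ℝ, -(1/2 : ℝ) * t ^ 2 = -t ^ 2 / 2 from fun t => by ring] at h
  rw [h]; rw [show (π / (1/2) : ℝ) = 2 * π by ring]

lemma int_gauss0 : Integrable (fun t : ℝ => Real.exp (-t ^ 2 / 2)) := by
  have h := integrable_exp_neg_mul_sq (show (0:ℝ) < 1/2 by norm_num)
  simpa only [show ∀ t : ℝ, -(1/2 : ℝ) * t ^ 2 = -t ^ 2 / 2 from fun t => by ring] using h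

lemma int_gauss1 : Integrable (fun t : ℝ => t * Real.exp (-t ^ 2 / 2)) := by
  have h := integrable_mul_exp_neg_mul_sq (show (0:ℝ) < 1/2 by norm_num)
  simpa only [show ∀ t : ℝ, -(1/2 : ℝ) * t ^ 2 = -t ^ 2 / 2 from fun t => by ring] using h

lemma int_gauss2 : Integrable (fun t : ℝ => t ^ 2 * Real.exp (-t ^ 2 / 2)) := by
  have h := integrable_rpow_mul_exp_neg_mul_sq (show (0:ℝ) < 1/2 by norm_num)
    (show (-1:ℝ) < 2 by norm_num)
  simp only [show ∀ t : ℝ, -(1/2 : ℝ) * t ^ 2 = -t ^ 2 / 2 from fun t => by ring] at h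
  simpa only [show ((2:ℝ)) = ((2:ℕ):ℝ) by norm_num, Real.rpow_natCast] using h

lemma gauss1 : ∫ t : ℝ, t * Real.exp (-t ^ 2 / 2) = 0 := by
  set f : ℝ → ℝ := fun t => t * Real.exp (-t ^ 2 / 2) with hf
  have hmap : ∫ t, f t = ∫ t, f (-t) := by
    conv_lhs => rw [← Measure.map_neg_eq_self (volume : Measure ℝ)]
    exact MeasureTheory.integral_map_equiv (MeasurableEquiv.neg ℝ) f
  have hodd : ∀ t, f (-t) = - f t := by intro t; simp only [hf]; ring_nf
  simp only [hodd, integral_neg] at hmap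
  linarith

lemma gauss2 : ∫ t : ℝ, t ^ 2 * Real.exp (-t ^ 2 / 2) = Real.sqrt (2 * Real.pi) := by
  have hF : ∀ t : ℝ, HasDerivAt (fun s : ℝ => s * Real.exp (-s ^ 2 / 2))
      ((1 - t ^ 2) * Real.exp (-t ^ 2 / 2)) t := by
    intro t
    have h1 : HasDerivAt (fun s : ℝ => -s ^ 2 / 2) (-t) t := by
      have := ((hasDerivAt_pow 2 t).neg).div_const 2
      refine this.congr_deriv ?_
      simp; ring
    have h3 := (hasDerivAt_id t).mul h1.exp
    refine h3.congr_deriv ?_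
    simp [id]; ring
  have htend : Tendsto (fun t : ℝ => t * Real.exp (-t ^ 2 / 2)) atTop (nhds 0) := by
    have hbound : ∀ᶠ t : ℝ in atTop, ‖t * Real.exp (-t ^ 2 / 2)‖ ≤ t * Real.exp (-t) := by
      filter_upwards [eventually_ge_atTop (2:ℝ)] with t ht
      have h1 : Real.exp (-t ^ 2 / 2) ≤ Real.exp (-t) := by
        apply Real.exp_le_exp.2; nlinarith
      have h0 : (0:ℝ) ≤ t := by linarith
      rw [Real.norm_eq_abs, abs_of_nonneg (by positivity)]
      exact mul_le_mul_of_nonneg_left h1 h0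
    have h2 : Tendsto (fun t : ℝ => t * Real.exp (-t)) atTop (nhds 0) := by
      simpa using Real.tendsto_pow_mul_exp_neg_atTop_nhds_zero 1
    exact squeeze_zero_norm' hbound h2
  have hint : IntegrableOn (fun t : ℝ => (1 - t ^ 2) * Real.exp (-t ^ 2 / 2)) (Ioi 0) := by
    have := (int_gauss0.sub int_gauss2).integrableOn (s := Ioi (0:ℝ))
    refine this.congr_fun (fun t _ => by simp only [Pi.sub_apply]; ring) measurableSet_Ioi
  have key := integral_Ioi_of_hasDerivAt_of_tendsto' (f := fun s : ℝ => s * Real.exp (-s ^ 2 / 2))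
    (fun x _ => hF x) hint (by simpa using htend)
  -- key : ∫ t in Ioi 0, (1 - t^2) * exp = 0 - 0 * exp 0
  have key2 : (∫ t in Ioi (0:ℝ), Real.exp (-t ^ 2 / 2)) =
      ∫ t in Ioi (0:ℝ), t ^ 2 * Real.exp (-t ^ 2 / 2) := by
    have hz : (∫ t in Ioi (0:ℝ), (1 - t ^ 2) * Real.exp (-t ^ 2 / 2)) = 0 := by
      rw [key]; simp
    have hsub : (∫ t in Ioi (0:ℝ), (Real.exp (-t ^ 2 / 2) - t ^ 2 * Real.exp (-t ^ 2 / 2)))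
        = 0 := by
      calc (∫ t in Ioi (0:ℝ), (Real.exp (-t ^ 2 / 2) - t ^ 2 * Real.exp (-t ^ 2 / 2)))
          = ∫ t in Ioi (0:ℝ), (1 - t ^ 2) * Real.exp (-t ^ 2 / 2) :=
            setIntegral_congr_fun measurableSet_Ioi (fun t _ => by ring)
        _ = 0 := hz
    have := integral_sub (int_gauss0.integrableOn (s := Ioi (0:ℝ)))
      (int_gauss2.integrableOn (s := Ioi (0:ℝ)))
    rw [this] at hsub
    linarith
  have e1 : ∫ t : ℝ, t ^ 2 * Real.exp (-t ^ 2 / 2)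
      = 2 * ∫ t in Ioi (0:ℝ), t ^ 2 * Real.exp (-t ^ 2 / 2) := by
    rw [← integral_comp_abs (f := fun t : ℝ => t ^ 2 * Real.exp (-t ^ 2 / 2))]
    congr 1; funext t; rw [sq_abs]
  have e0 : ∫ t : ℝ, Real.exp (-t ^ 2 / 2)
      = 2 * ∫ t in Ioi (0:ℝ), Real.exp (-t ^ 2 / 2) := by
    rw [← integral_comp_abs (f := fun t : ℝ => Real.exp (-t ^ 2 / 2))]
    congr 1; funext t; rw [sq_abs]
  rw [e1, ← key2, ← e0, gauss0]

section Moments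
variable {k : ℕ}

lemma int_prodg : Integrable (fun u : Fin k → ℝ => ∏ j, Real.exp (-(u j) ^ 2 / 2)) :=
  Integrable.fintype_prod (f := fun _ : Fin k => fun t : ℝ => Real.exp (-t ^ 2 / 2))
    (fun _ => int_gauss0)

lemma mom0 : ∫ u : Fin k → ℝ, ∏ j, Real.exp (-(u j) ^ 2 / 2) = Real.sqrt (2*π) ^ k := by
  rw [volume_pi, integral_fintype_prod_eq_pow (ι := Fin k) (μ := volume) (fun t : ℝ => Real.exp (-t ^ 2 / 2)), gauss0,
    Fintype.card_fin]

lemma reX (j : Fin k) : ∀ u : Fin k → ℝ, u j * ∏ m, Real.exp (-(u m) ^ 2 / 2)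
    = ∏ m, ((if m = j then u m else 1) * Real.exp (-(u m) ^ 2 / 2)) := by
  intro u
  rw [Finset.prod_mul_distrib, Finset.prod_ite_eq' Finset.univ j u]
  simp

lemma intX (j : Fin k) :
    Integrable (fun u : Fin k → ℝ => u j * ∏ m, Real.exp (-(u m) ^ 2 / 2)) := by
  rw [funext (reX j)]
  refine Integrable.fintype_prod
    (f := fun m (t : ℝ) => (if m = j then t else 1) * Real.exp (-t ^ 2 / 2)) (fun m => ?_)
  by_cases hm : m = j
  · simpa [hm] using int_gauss1
  · simpa [hm] using int_gauss0

lemma momX (j : Fin k) :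
    ∫ u : Fin k → ℝ, u j * ∏ m, Real.exp (-(u m) ^ 2 / 2) = 0 := by
  simp only [reX j]
  have h2 := integral_fintype_prod_eq_prod (ι := Fin k)
    (fun m (t : ℝ) => (if m = j then t else 1) * Real.exp (-t ^ 2 / 2)) (μ := fun _ => volume)
  rw [volume_pi, h2]
  refine Finset.prod_eq_zero (Finset.mem_univ j) ?_
  simpa using gauss1

lemma reXX (j l : Fin k) : ∀ u : Fin k → ℝ, (u j * u l) * ∏ m, Real.exp (-(u m) ^ 2 / 2)
    = ∏ m, ((if m = j then u m else 1) * (if m = l then u m else 1)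
        * Real.exp (-(u m) ^ 2 / 2)) := by
  intro u
  rw [Finset.prod_mul_distrib, Finset.prod_mul_distrib, Finset.prod_ite_eq' Finset.univ j u,
    Finset.prod_ite_eq' Finset.univ l u]
  simp

lemma intXX (j l : Fin k) :
    Integrable (fun u : Fin k → ℝ => (u j * u l) * ∏ m, Real.exp (-(u m) ^ 2 / 2)) := by
  rw [funext (reXX j l)]
  refine Integrable.fintype_prod
    (f := fun m (t : ℝ) => (if m = j then t else 1) * (if m = l then t else 1)
      * Real.exp (-t ^ 2 / 2)) (fun m => ?_)
  by_cases hm1 : m = j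
  · subst hm1
    by_cases hm2 : m = l
    · subst hm2
      simpa [pow_two] using int_gauss2
    · simpa [hm2] using int_gauss1
  · by_cases hm2 : m = l
    · subst hm2
      simpa [hm1] using int_gauss1
    · simpa [hm1, hm2] using int_gauss0

lemma momXX (j l : Fin k) :
    ∫ u : Fin k → ℝ, (u j * u l) * ∏ m, Real.exp (-(u m) ^ 2 / 2)
      = if j = l then Real.sqrt (2*π) ^ k else 0 := by
  simp only [reXX j l]
  have h2 := integral_fintype_prod_eq_prod (ι := Fin k)
    (fun m (t : ℝ) => (if m = j then t else 1) * (if m = l then t else 1)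
      * Real.exp (-t ^ 2 / 2)) (μ := fun _ => volume)
  rw [volume_pi, h2]
  by_cases h : j = l
  · subst h
    rw [if_pos rfl]
    have h3 : ∀ m ∈ Finset.univ, (∫ t : ℝ, (if m = j then t else 1) * (if m = j then t else 1)
        * Real.exp (-t ^ 2 / 2)) = Real.sqrt (2*π) := by
      intro m _
      by_cases hm : m = j
      · simp only [hm, if_pos rfl]
        simpa [pow_two] using gauss2
      · simpa [hm] using gauss0
    rw [Finset.prod_congr rfl h3, Finset.prod_const, Finset.card_univ, Fintype.card_fin]
  · rw [if_neg h]
    refine Finset.prod_eq_zero (Finset.mem_univ j) ?_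
    simpa [h] using gauss1

end Moments

lemma integral_quad_poly {k : ℕ} (r : ℝ) (v : Fin k → ℝ) (W : Matrix (Fin k) (Fin k) ℝ) :
    ∫ u : Fin k → ℝ,
        (r + ∑ j, v j * u j + ∑ j, ∑ l, W j l * (u j * u l)) * ∏ m, Real.exp (-(u m) ^ 2 / 2)
      = (r + ∑ j, W j j) * Real.sqrt (2*π) ^ k := by
  have hre : ∀ u : Fin k → ℝ,
      (r + ∑ j, v j * u j + ∑ j, ∑ l, W j l * (u j * u l)) * ∏ m, Real.exp (-(u m) ^ 2 / 2)
      = r * (∏ m, Real.exp (-(u m) ^ 2 / 2))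
        + (∑ j, v j * (u j * ∏ m, Real.exp (-(u m) ^ 2 / 2)))
        + ∑ j, ∑ l, W j l * ((u j * u l) * ∏ m, Real.exp (-(u m) ^ 2 / 2)) := by
    intro u
    rw [add_mul, add_mul, Finset.sum_mul, Finset.sum_mul]
    congr 1
    · congr 1
      exact Finset.sum_congr rfl fun j _ => by ring
    · refine Finset.sum_congr rfl fun j _ => ?_
      rw [Finset.sum_mul]
      exact Finset.sum_congr rfl fun l _ => by ring
  simp only [hre]
  have i1 : Integrable (fun u : Fin k → ℝ => r * ∏ m, Real.exp (-(u m) ^ 2 / 2)) :=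
    int_prodg.const_mul r
  have i2 : Integrable (fun u : Fin k → ℝ =>
      ∑ j, v j * (u j * ∏ m, Real.exp (-(u m) ^ 2 / 2))) :=
    integrable_finset_sum _ (fun j _ => (intX j).const_mul _)
  have i3 : Integrable (fun u : Fin k → ℝ =>
      ∑ j, ∑ l, W j l * ((u j * u l) * ∏ m, Real.exp (-(u m) ^ 2 / 2))) :=
    integrable_finset_sum _ (fun j _ =>
      integrable_finset_sum _ (fun l _ => (intXX j l).const_mul _))
  have i12 : Integrable (fun u : Fin k → ℝ =>
      r * (∏ m, Real.exp (-(u m) ^ 2 / 2))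
        + ∑ j, v j * (u j * ∏ m, Real.exp (-(u m) ^ 2 / 2))) := i1.add i2
  rw [integral_add i12 i3, integral_add i1 i2]
  rw [integral_finset_sum _ (fun j (_ : j ∈ Finset.univ) => (intX j).const_mul (v j)),
    integral_finset_sum _ (fun j (_ : j ∈ Finset.univ) =>
      integrable_finset_sum _ (fun l _ => (intXX j l).const_mul (W j l)))]
  have e3 : ∀ j : Fin k, (∫ u : Fin k → ℝ,
      ∑ l, W j l * ((u j * u l) * ∏ m, Real.exp (-(u m) ^ 2 / 2)))
      = W j j * Real.sqrt (2*π) ^ k := by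
    intro j
    rw [integral_finset_sum _ (fun l (_ : l ∈ Finset.univ) => (intXX j l).const_mul (W j l))]
    simp_rw [integral_const_mul, momXX]
    simp [Finset.sum_ite_eq]
  simp_rw [integral_const_mul, momX, mul_zero, mom0, e3, Finset.sum_const_zero, add_zero,
    ← Finset.sum_mul, ← add_mul]
/-- The Hyvärinen discrepancy between two multivariate normals
`P = N_k(μ_P, Φ_P⁻¹)` and `Q = N_k(μ_Q, Φ_Q⁻¹)`:
`∫ ‖∇ log p − ∇ log q‖² p dx = tr(Φ_P − 2Φ_Q + Φ_P⁻¹Φ_Q²) + ‖Φ_Q(μ_P − μ_Q)‖²`. -/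
theorem hyvarinen_discrepancy_mvn {k : ℕ} (μP μQ : Fin k → ℝ)
    (ΦP ΦQ : Matrix (Fin k) (Fin k) ℝ) (hP : ΦP.PosDef) (hQ : ΦQ.PosDef)
    (p : (Fin k → ℝ) → ℝ)
    (hp : ∀ x, p x = (2 * Real.pi) ^ (-(k : ℝ) / 2) * Real.sqrt ΦP.det *
      Real.exp (-(1/2) * dotProduct (x - μP) (ΦP.mulVec (x - μP)))) :
    (∫ x : Fin k → ℝ,
        (∑ i, ((-(ΦP.mulVec (x - μP) i)) - (-(ΦQ.mulVec (x - μQ) i))) ^ 2) * p x)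
      = (ΦP - 2 • ΦQ + ΦP⁻¹ * ΦQ ^ 2).trace
        + ∑ i, (ΦQ.mulVec (μP - μQ) i) ^ 2 := by
  classical
  set A : Matrix (Fin k) (Fin k) ℝ := ΦP - ΦQ with hA
  set b : Fin k → ℝ := ΦQ.mulVec (μP - μQ) with hb
  set c : ℝ := (2 * Real.pi) ^ (-(k : ℝ) / 2) * Real.sqrt ΦP.det with hc
  set R : Matrix (Fin k) (Fin k) ℝ := CFC.sqrt ΦP with hR
  have hRH : R.IsHermitian := (Matrix.nonneg_iff_posSemidef.mp (CFC.sqrt_nonneg ΦP)).isHermitian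
  have hRR : R * R = ΦP := CFC.sqrt_mul_sqrt_self ΦP (Matrix.nonneg_iff_posSemidef.mpr hP.posSemidef)
  have hdetP : 0 < ΦP.det := hP.det_pos
  have hdetRnn : 0 ≤ R.det := by
    have h := Matrix.nonneg_iff_posSemidef.mp (CFC.sqrt_nonneg ΦP)
    rw [h.1.det_eq_prod_eigenvalues]
    exact Finset.prod_nonneg fun i _ => h.eigenvalues_nonneg i
  have hdetR : R.det = Real.sqrt ΦP.det := by
    rw [← hRR, Matrix.det_mul, Real.sqrt_mul_self hdetRnn]
  have hdetRpos : 0 < R.det := by rw [hdetR]; exact Real.sqrt_pos.2 hdetP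
  have hRunit : IsUnit R.det := hdetRpos.ne'.isUnit
  set S : Matrix (Fin k) (Fin k) ℝ := R⁻¹ with hS
  have hSR : S * R = 1 := Matrix.nonsing_inv_mul R hRunit
  have hRS : R * S = 1 := Matrix.mul_nonsing_inv R hRunit
  have hSH : S.IsHermitian := hRH.inv
  have hdetS : S.det = (R.det)⁻¹ := by
    rw [hS, Matrix.det_nonsing_inv, Ring.inverse_eq_inv']
  have hdetSne : S.det ≠ 0 := by rw [hdetS]; exact inv_ne_zero hdetRpos.ne'
  have hSS : S * S = ΦP⁻¹ := by rw [hS, ← Matrix.mul_inv_rev, hRR]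
  set M : Matrix (Fin k) (Fin k) ℝ := A * S with hM
  set F : (Fin k → ℝ) → ℝ := fun y =>
    (∑ i, (A.mulVec y i - b i) ^ 2) *
      (c * Real.exp (-(1/2) * dotProduct y (ΦP.mulVec y))) with hF
  -- Step A : rewrite the integrand
  have hintegrand : ∀ x : Fin k → ℝ,
      (∑ i, ((-(ΦP.mulVec (x - μP) i)) - (-(ΦQ.mulVec (x - μQ) i))) ^ 2) * p x
        = F (x - μP) := by
    intro x
    rw [hp x, hF]
    dsimp only
    have hxq : x - μQ = (x - μP) + (μP - μQ) := by abel
    rw [hxq, Matrix.mulVec_add]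
    congr 1
    refine Finset.sum_congr rfl fun i _ => ?_
    rw [hA, Matrix.sub_mulVec]
    simp only [Pi.add_apply, Pi.sub_apply, hb]
    ring
  -- Step B : translation
  have step1 : (∫ x : Fin k → ℝ,
      (∑ i, ((-(ΦP.mulVec (x - μP) i)) - (-(ΦQ.mulVec (x - μQ) i))) ^ 2) * p x)
      = ∫ y, F y := by
    rw [integral_congr_ae (ae_of_all _ hintegrand)]
    exact integral_sub_right_eq_self F μP
  -- Step C : linear change of variables
  haveI : Invertible S := S.invertibleOfIsUnitDet (hdetSne.isUnit)
  set e : (Fin k → ℝ) ≃ₗ[ℝ] (Fin k → ℝ) := S.toLinearEquiv' ‹Invertible S› with he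
  set em : (Fin k → ℝ) ≃ᵐ (Fin k → ℝ) :=
    e.toContinuousLinearEquiv.toHomeomorph.toMeasurableEquiv with hem
  have hemapp : ∀ u, em u = S.mulVec u := fun u => rfl
  have hmapem : Measure.map em volume = Measure.map (Matrix.toLin' S) volume := by
    congr 1
  have step2 : (∫ y, F y) = |S.det| * ∫ u, F (S.mulVec u) := by
    have h1 : (∫ u, F (S.mulVec u)) = |S.det|⁻¹ * ∫ y, F y := by
      calc ∫ u, F (S.mulVec u) = ∫ u, F (em u) := by simp_rw [hemapp]
        _ = ∫ y, F y ∂(Measure.map em volume) := (MeasureTheory.integral_map_equiv em F).symm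
        _ = ∫ y, F y ∂(Measure.map (Matrix.toLin' S) volume) := by rw [hmapem]
        _ = ∫ y, F y ∂(ENNReal.ofReal |(S.det)⁻¹| • volume) := by
            rw [Real.map_matrix_volume_pi_eq_smul_volume_pi hdetSne]
        _ = |S.det|⁻¹ * ∫ y, F y := by
            rw [integral_smul_measure, ENNReal.toReal_ofReal (abs_nonneg _), smul_eq_mul, abs_inv]
    rw [h1, ← mul_assoc, mul_inv_cancel₀ (abs_ne_zero.2 hdetSne), one_mul]
  -- Step D : simplify F ∘ S
  have hFS : ∀ u : Fin k → ℝ, F (S.mulVec u)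
      = c * ((∑ i, (M.mulVec u i - b i) ^ 2) * ∏ m, Real.exp (-(u m) ^ 2 / 2)) := by
    intro u
    rw [hF]
    dsimp only
    have h1 : A.mulVec (S.mulVec u) = M.mulVec u := by rw [Matrix.mulVec_mulVec, ← hM]
    have hRT : Rᵀ = R := by
      have := hRH; rwa [Matrix.IsHermitian, Matrix.conjTranspose_eq_transpose_of_trivial] at this
    have h2 : dotProduct (S.mulVec u) (ΦP.mulVec (S.mulVec u)) = dotProduct u u := by
      rw [Matrix.mulVec_mulVec]
      have hPS : ΦP * S = R := by rw [← hRR, Matrix.mul_assoc, hRS, Matrix.mul_one]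
      rw [hPS, dotProduct_mulVec]
      congr 1
      rw [← Matrix.mulVec_transpose, Matrix.mulVec_mulVec, hRT, hRS, Matrix.one_mulVec]
    rw [h1, h2]
    have h3 : Real.exp (-(1/2) * dotProduct u u) = ∏ m, Real.exp (-(u m) ^ 2 / 2) := by
      rw [← Real.exp_sum]
      congr 1
      rw [dotProduct, Finset.mul_sum]
      exact Finset.sum_congr rfl fun m _ => by ring
    rw [h3]; ring
  -- Step E : moment computation
  have key : (∫ u : Fin k → ℝ, (∑ i, (M.mulVec u i - b i) ^ 2) * ∏ m, Real.exp (-(u m) ^ 2 / 2))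
      = ((∑ i, b i ^ 2) + ∑ j, ∑ i, M i j ^ 2) * Real.sqrt (2*Real.pi) ^ k := by
    have hpt : ∀ u : Fin k → ℝ, (∑ i, (M.mulVec u i - b i) ^ 2)
        = (∑ i, b i ^ 2) + (∑ j, (-2 * ∑ i, b i * M i j) * u j)
          + ∑ j, ∑ l, (Matrix.of (fun j l => ∑ i, M i j * M i l)) j l * (u j * u l) := by
      intro u
      have hper : ∀ i, (M.mulVec u i - b i) ^ 2
          = b i ^ 2 + (∑ j, (-2 * (b i * M i j)) * u j)
            + ∑ j, ∑ l, (M i j * M i l) * (u j * u l) := by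
        intro i
        have hmv : M.mulVec u i = ∑ j, M i j * u j := by
          simp [Matrix.mulVec, dotProduct]
        have hmid : ∑ j, (-2 * (b i * M i j)) * u j = -2 * b i * ∑ j, M i j * u j := by
          rw [Finset.mul_sum]
          exact Finset.sum_congr rfl fun j _ => by ring
        have hdd : ∑ j, ∑ l, (M i j * u j) * (M i l * u l)
            = ∑ j, ∑ l, (M i j * M i l) * (u j * u l) :=
          Finset.sum_congr rfl fun j _ => Finset.sum_congr rfl fun l _ => by ring
        rw [hmv, hmid, sub_sq, pow_two, Finset.sum_mul_sum, hdd]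
        ring
      simp only [hper]
      rw [Finset.sum_add_distrib, Finset.sum_add_distrib]
      congr 1
      · congr 1
        rw [Finset.sum_comm]
        refine Finset.sum_congr rfl fun j _ => ?_
        rw [Finset.mul_sum, Finset.sum_mul]
      · rw [Finset.sum_comm]
        refine Finset.sum_congr rfl fun j _ => ?_
        rw [Finset.sum_comm]
        refine Finset.sum_congr rfl fun l _ => ?_
        rw [Matrix.of_apply, Finset.sum_mul]
    calc (∫ u : Fin k → ℝ, (∑ i, (M.mulVec u i - b i) ^ 2) * ∏ m, Real.exp (-(u m) ^ 2 / 2))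
        = ∫ u : Fin k → ℝ,
            ((∑ i, b i ^ 2) + (∑ j, (-2 * ∑ i, b i * M i j) * u j)
              + ∑ j, ∑ l, (Matrix.of (fun j l => ∑ i, M i j * M i l)) j l * (u j * u l))
            * ∏ m, Real.exp (-(u m) ^ 2 / 2) :=
          integral_congr_ae (ae_of_all _ fun u => by dsimp only; rw [hpt u])
      _ = ((∑ i, b i ^ 2) + ∑ j, (Matrix.of (fun j l => ∑ i, M i j * M i l)) j j)
            * Real.sqrt (2*Real.pi) ^ k :=
          integral_quad_poly _ _ _
      _ = ((∑ i, b i ^ 2) + ∑ j, ∑ i, M i j ^ 2) * Real.sqrt (2*Real.pi) ^ k := by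
          congr 2
          refine Finset.sum_congr rfl fun j _ => ?_
          rw [Matrix.of_apply]
          exact Finset.sum_congr rfl fun i _ => (pow_two _).symm
  -- constants
  have h2pi : (0:ℝ) < 2 * Real.pi := by positivity
  have hconst : |S.det| * c * Real.sqrt (2*Real.pi) ^ k = 1 := by
    have habs : |S.det| = (Real.sqrt ΦP.det)⁻¹ := by
      rw [hdetS, hdetR, abs_of_pos (by rw [← hdetR]; positivity)]
    rw [habs, hc]
    have hsd : Real.sqrt ΦP.det ≠ 0 := by positivity
    rw [show (Real.sqrt ΦP.det)⁻¹ * ((2 * Real.pi) ^ (-(k:ℝ)/2) * Real.sqrt ΦP.det)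
        = (2 * Real.pi) ^ (-(k:ℝ)/2) from by field_simp]
    rw [Real.sqrt_eq_rpow, ← Real.rpow_natCast ((2*Real.pi) ^ ((1:ℝ)/2)) k,
      ← Real.rpow_mul h2pi.le, ← Real.rpow_add h2pi,
      show (-(k:ℝ)/2 + 1/2 * (k:ℕ)) = 0 by push_cast; ring, Real.rpow_zero]
  -- trace identity
  have hPT : ΦPᵀ = ΦP := by
    have := hP.1; rwa [Matrix.IsHermitian, Matrix.conjTranspose_eq_transpose_of_trivial] at this
  have hQT : ΦQᵀ = ΦQ := by
    have := hQ.1; rwa [Matrix.IsHermitian, Matrix.conjTranspose_eq_transpose_of_trivial] at this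
  have hST : Sᵀ = S := by
    have := hSH; rwa [Matrix.IsHermitian, Matrix.conjTranspose_eq_transpose_of_trivial] at this
  have hAT : Aᵀ = A := by rw [hA, Matrix.transpose_sub, hPT, hQT]
  have htr : ∑ j, ∑ i, M i j ^ 2 = (ΦP - 2 • ΦQ + ΦP⁻¹ * ΦQ ^ 2).trace := by
    have h1 : ∑ j, ∑ i, M i j ^ 2 = (M * Mᵀ).trace := by
      rw [Matrix.trace, Finset.sum_comm]
      refine Finset.sum_congr rfl fun i _ => ?_
      simp [Matrix.mul_apply, Matrix.diag, pow_two]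
    have h2 : M * Mᵀ = A * ΦP⁻¹ * A := by
      rw [hM, Matrix.transpose_mul, hST, hAT,
        show A * S * (S * A) = A * (S * S) * A by noncomm_ring, hSS]
    have hPPi : ΦP * ΦP⁻¹ = 1 := Matrix.mul_nonsing_inv ΦP hdetP.ne'.isUnit
    have hPiP : ΦP⁻¹ * ΦP = 1 := Matrix.nonsing_inv_mul ΦP hdetP.ne'.isUnit
    have h3 : A * ΦP⁻¹ * A = ΦP - ΦQ - ΦQ + ΦQ * ΦP⁻¹ * ΦQ := by
      rw [hA]
      calc (ΦP - ΦQ) * ΦP⁻¹ * (ΦP - ΦQ)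
          = ΦP * ΦP⁻¹ * ΦP - ΦP * ΦP⁻¹ * ΦQ - ΦQ * (ΦP⁻¹ * ΦP) + ΦQ * ΦP⁻¹ * ΦQ := by
            noncomm_ring
        _ = ΦP - ΦQ - ΦQ + ΦQ * ΦP⁻¹ * ΦQ := by
            rw [hPPi, hPiP]; simp
    have h4 : (ΦQ * ΦP⁻¹ * ΦQ).trace = (ΦP⁻¹ * ΦQ ^ 2).trace := by
      rw [Matrix.trace_mul_cycle, show ΦQ * ΦQ = ΦQ ^ 2 from (pow_two ΦQ).symm,
        Matrix.trace_mul_comm]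
    rw [h1, h2, h3]
    simp only [Matrix.trace_add, Matrix.trace_sub, Matrix.trace_smul, h4, smul_eq_mul]
    ring
  -- final assembly
  rw [step1, step2, integral_congr_ae (ae_of_all _ hFS), integral_const_mul, key, ← htr]
  have : |S.det| * (c * (((∑ i, b i ^ 2) + ∑ j, ∑ i, M i j ^ 2) * Real.sqrt (2*Real.pi) ^ k))
      = (|S.det| * c * Real.sqrt (2*Real.pi) ^ k)
        * ((∑ i, b i ^ 2) + ∑ j, ∑ i, M i j ^ 2) := by ring
  rw [this, hconst, one_mul]
  ring
end

section
/- For univariate normals P = N(μ_P, σ_P²) and Q = N(μ_Q, σ_Q²), the Hyvärinen discrepancy satisfies D_H(P,Q) ≥ (2/σ_Q²)·KL(P,Q), where KL(P,Q) = ½{σ_P²/σ_Q² + log(σ_Q²/σ_P²) + (μ_P − μ_Q)²/σ_Q² − 1} is the Kullback–Leibler divergence. -/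
open Real MeasureTheory

lemma integrable_sq_mul_exp_neg_mul_sq {b : ℝ} (hb : 0 < b) :
    Integrable fun x : ℝ => x ^ 2 * Real.exp (-b * x ^ 2) := by
  have := integrable_rpow_mul_exp_neg_mul_sq hb (s := 2) (by norm_num)
  simpa [Real.rpow_natCast] using this

lemma integral_mul_exp_neg_mul_sq_eq_zero {b : ℝ} (hb : 0 < b) :
    ∫ x : ℝ, x * Real.exp (-b * x ^ 2) = 0 := by
  have hderiv : ∀ x : ℝ, HasDerivAt (fun x : ℝ => -(2 * b)⁻¹ * Real.exp (-b * x ^ 2))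
      (x * Real.exp (-b * x ^ 2)) x := by
    intro x
    have h1 : HasDerivAt (fun x : ℝ => -b * x ^ 2) (-b * (2 * x)) x := by
      simpa using ((hasDerivAt_pow 2 x).const_mul (-b))
    have h2 := (h1.exp).const_mul (-(2 * b)⁻¹)
    refine h2.congr_deriv ?_
    field_simp
  have := integral_eq_zero_of_hasDerivAt_of_integrable hderiv
    (integrable_mul_exp_neg_mul_sq hb)
    ((integrable_exp_neg_mul_sq hb).const_mul _)
  simpa using this

lemma integral_sq_mul_exp_neg_mul_sq {b : ℝ} (hb : 0 < b) :
    ∫ x : ℝ, x ^ 2 * Real.exp (-b * x ^ 2)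
      = (2 * b)⁻¹ * Real.sqrt (π / b) := by
  have hderiv : ∀ x : ℝ, HasDerivAt (fun x : ℝ => (2 * b)⁻¹ * (x * Real.exp (-b * x ^ 2)))
      ((2 * b)⁻¹ * Real.exp (-b * x ^ 2) - x ^ 2 * Real.exp (-b * x ^ 2)) x := by
    intro x
    have h1 : HasDerivAt (fun x : ℝ => -b * x ^ 2) (-b * (2 * x)) x := by
      simpa using ((hasDerivAt_pow 2 x).const_mul (-b))
    have h2 := ((hasDerivAt_id x).mul h1.exp).const_mul ((2 * b)⁻¹)
    refine h2.congr_deriv ?_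
    simp only [id]
    field_simp
    ring
  have hint : Integrable fun x : ℝ =>
      (2 * b)⁻¹ * Real.exp (-b * x ^ 2) - x ^ 2 * Real.exp (-b * x ^ 2) :=
    ((integrable_exp_neg_mul_sq hb).const_mul _).sub (integrable_sq_mul_exp_neg_mul_sq hb)
  have hzero := integral_eq_zero_of_hasDerivAt_of_integrable hderiv hint
    ((integrable_mul_exp_neg_mul_sq hb).const_mul _)
  rw [integral_sub ((integrable_exp_neg_mul_sq hb).const_mul _)
    (integrable_sq_mul_exp_neg_mul_sq hb), integral_const_mul, integral_gaussian] at hzero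
  linarith

/-- For univariate normals `P = N(μ_P,σ_P²)`, `Q = N(μ_Q,σ_Q²)`, the Hyvärinen
discrepancy dominates `(2/σ_Q²)` times the Kullback–Leibler divergence
`KL(P,Q) = ½{σ_P²/σ_Q² + log(σ_Q²/σ_P²) + (μ_P−μ_Q)²/σ_Q² − 1}`. -/
theorem hyvarinen_ge_kl_univariate (μP μQ σP σQ : ℝ)
    (hσP : 0 < σP) (hσQ : 0 < σQ) (p : ℝ → ℝ)
    (hp : ∀ x, p x = (Real.sqrt (2 * Real.pi * σP ^ 2))⁻¹ *
        Real.exp (-(x - μP) ^ 2 / (2 * σP ^ 2))) :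
    (∫ x : ℝ, ((-(x - μP) / σP ^ 2) - (-(x - μQ) / σQ ^ 2)) ^ 2 * p x)
      ≥ (2 / σQ ^ 2) *
        ((1 / 2) * (σP ^ 2 / σQ ^ 2 + Real.log (σQ ^ 2 / σP ^ 2)
          + (μP - μQ) ^ 2 / σQ ^ 2 - 1)) := by
  have hσP2 : (0:ℝ) < σP ^ 2 := by positivity
  have hσQ2 : (0:ℝ) < σQ ^ 2 := by positivity
  set b : ℝ := (2 * σP ^ 2)⁻¹ with hbdef
  have hb : 0 < b := by positivity
  set a : ℝ := (σQ ^ 2)⁻¹ - (σP ^ 2)⁻¹ with hadef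
  set c : ℝ := (μP - μQ) / σQ ^ 2 with hcdef
  set K : ℝ := Real.sqrt (2 * Real.pi * σP ^ 2) with hKdef
  have hK : K = Real.sqrt (π / b) := by
    rw [hKdef, hbdef]
    congr 1
    field_simp
  have hKpos : 0 < K := by
    rw [hKdef]
    exact Real.sqrt_pos.mpr (by positivity)
  -- Step 1: compute the integral
  have hI : (∫ x : ℝ, ((-(x - μP) / σP ^ 2) - (-(x - μQ) / σQ ^ 2)) ^ 2 * p x)
      = a ^ 2 * σP ^ 2 + c ^ 2 := by
    have hshift : (∫ x : ℝ, ((-(x - μP) / σP ^ 2) - (-(x - μQ) / σQ ^ 2)) ^ 2 * p x)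
        = ∫ y : ℝ, (a * y + c) ^ 2 * (K⁻¹ * Real.exp (-b * y ^ 2)) := by
      rw [← integral_sub_right_eq_self
        (fun y => (a * y + c) ^ 2 * (K⁻¹ * Real.exp (-b * y ^ 2))) μP]
      congr 1
      funext x
      rw [hp x]
      have h1 : -(x - μP) ^ 2 / (2 * σP ^ 2) = -b * (x - μP) ^ 2 := by
        rw [hbdef]; field_simp
      have h2 : (-(x - μP) / σP ^ 2) - (-(x - μQ) / σQ ^ 2) = a * (x - μP) + c := by
        rw [hadef, hcdef]; field_simp; ring
      rw [h1, h2]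
    rw [hshift]
    have heq : ∀ y : ℝ, (a * y + c) ^ 2 * (K⁻¹ * Real.exp (-b * y ^ 2))
        = K⁻¹ * (a ^ 2 * (y ^ 2 * Real.exp (-b * y ^ 2))
            + (2 * a * c) * (y * Real.exp (-b * y ^ 2))
            + c ^ 2 * Real.exp (-b * y ^ 2)) := by
      intro y; ring
    simp_rw [heq]
    have int1 : Integrable fun y : ℝ => a ^ 2 * (y ^ 2 * Real.exp (-b * y ^ 2)) :=
      (integrable_sq_mul_exp_neg_mul_sq hb).const_mul _
    have int2 : Integrable fun y : ℝ => (2 * a * c) * (y * Real.exp (-b * y ^ 2)) :=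
      (integrable_mul_exp_neg_mul_sq hb).const_mul _
    have int3 : Integrable fun y : ℝ => c ^ 2 * Real.exp (-b * y ^ 2) :=
      (integrable_exp_neg_mul_sq hb).const_mul _
    have int12 : Integrable fun y : ℝ => a ^ 2 * (y ^ 2 * Real.exp (-b * y ^ 2))
        + (2 * a * c) * (y * Real.exp (-b * y ^ 2)) := int1.add int2
    rw [integral_const_mul, integral_add int12 int3, integral_add int1 int2,
      integral_const_mul, integral_const_mul, integral_const_mul,
      integral_sq_mul_exp_neg_mul_sq hb, integral_mul_exp_neg_mul_sq_eq_zero hb,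
      integral_gaussian]
    have h2b : (2 * b)⁻¹ = σP ^ 2 := by rw [hbdef]; field_simp
    rw [h2b, ← hK]
    field_simp
    ring
  rw [hI, ge_iff_le]
  have hlog : Real.log (σQ ^ 2 / σP ^ 2) ≤ σQ ^ 2 / σP ^ 2 - 1 :=
    Real.log_le_sub_one_of_pos (by positivity)
  calc (2 / σQ ^ 2) * ((1 / 2) * (σP ^ 2 / σQ ^ 2 + Real.log (σQ ^ 2 / σP ^ 2)
          + (μP - μQ) ^ 2 / σQ ^ 2 - 1))
      ≤ (2 / σQ ^ 2) * ((1 / 2) * (σP ^ 2 / σQ ^ 2 + (σQ ^ 2 / σP ^ 2 - 1)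
          + (μP - μQ) ^ 2 / σQ ^ 2 - 1)) := by gcongr
    _ = a ^ 2 * σP ^ 2 + c ^ 2 := by
        rw [hadef, hcdef]; field_simp; ring
end

section
/- Let l(y) = −(ν/2) log(yᵀΠy) on ℝⁿ (where Π is the residual projection of rank ν = n − p, and yᵀΠy > 0). Writing r = Πy and RSS = yᵀΠy, one has ∂l/∂y_i = −ν r_i/RSS and ∂²l/∂y_i² = ν(2r_i²/RSS² − Π_{ii}/RSS); consequently the Hyvärinen score S_H = 2Δl + ‖∇l‖² equals −ν(ν−4)/RSS = −(ν−4)/σ̂², where σ̂² = RSS/ν. -/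
open Real Matrix

/-- Partial derivative of `f : (Fin n → ℝ) → ℝ` in the `i`-th coordinate. -/
noncomputable def pderiv' {n : ℕ} (f : (Fin n → ℝ) → ℝ) (i : Fin n)
    (x : Fin n → ℝ) : ℝ :=
  deriv (fun t => f (Function.update x i t)) (x i)

/-- For `l(y) = −(ν/2) log(yᵀΠy)` with `Π` the residual projection of rank
`ν = n − p`: writing `r = Πy`, `RSS = yᵀΠy > 0`, one has
`∂l/∂yᵢ = −ν rᵢ/RSS`, `∂²l/∂yᵢ² = ν(2rᵢ²/RSS² − Πᵢᵢ/RSS)`, and the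
Hyvärinen score `2Δl + ‖∇l‖²` equals `−ν(ν−4)/RSS = −(ν−4)/σ̂²` with
`σ̂² = RSS/ν`. -/
theorem hyvarinen_score_unknown_variance {n p : ℕ} (hpn : p ≤ n)
    (X : Matrix (Fin n) (Fin p) ℝ) (hrank : X.rank = p)
    (hinv : IsUnit (Xᵀ * X).det)
    (Pr : Matrix (Fin n) (Fin n) ℝ) (hPr : Pr = 1 - X * (Xᵀ * X)⁻¹ * Xᵀ)
    (l : (Fin n → ℝ) → ℝ)
    (hl : ∀ z, l z = -(((n : ℝ) - (p : ℝ)) / 2) *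
        Real.log (dotProduct z (Pr.mulVec z)))
    (y : Fin n → ℝ) (hRSS : 0 < dotProduct y (Pr.mulVec y)) :
    (∀ i, pderiv' l i y
        = -((n : ℝ) - (p : ℝ)) * (Pr.mulVec y i) /
            dotProduct y (Pr.mulVec y)) ∧
    (∀ i, pderiv' (pderiv' l i) i y
        = ((n : ℝ) - (p : ℝ)) *
            (2 * (Pr.mulVec y i) ^ 2 / (dotProduct y (Pr.mulVec y)) ^ 2
              - Pr i i / dotProduct y (Pr.mulVec y))) ∧
    2 * (∑ i, pderiv' (pderiv' l i) i y) + ∑ i, (pderiv' l i y) ^ 2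
      = -(((n : ℝ) - (p : ℝ)) * (((n : ℝ) - (p : ℝ)) - 4)) /
          dotProduct y (Pr.mulVec y) := by
  have h1 : (Xᵀ * X)⁻¹ * (Xᵀ * X) = 1 := Matrix.nonsing_inv_mul _ hinv
  -- symmetry of the projection
  have hsymm : Prᵀ = Pr := by
    rw [hPr]
    simp [Matrix.transpose_sub, Matrix.transpose_mul, Matrix.transpose_nonsing_inv,
      Matrix.transpose_transpose, Matrix.mul_assoc]
  -- idempotence
  have hMM : (X * (Xᵀ * X)⁻¹ * Xᵀ) * (X * (Xᵀ * X)⁻¹ * Xᵀ) = X * (Xᵀ * X)⁻¹ * Xᵀ := by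
    calc (X * (Xᵀ * X)⁻¹ * Xᵀ) * (X * (Xᵀ * X)⁻¹ * Xᵀ)
        = X * (((Xᵀ * X)⁻¹ * (Xᵀ * X)) * ((Xᵀ * X)⁻¹ * Xᵀ)) := by
          simp only [Matrix.mul_assoc]
      _ = X * (Xᵀ * X)⁻¹ * Xᵀ := by rw [h1, Matrix.one_mul, Matrix.mul_assoc]
  have hPP : Pr * Pr = Pr := by
    rw [hPr, sub_mul, mul_sub, mul_sub]
    simp only [Matrix.one_mul, Matrix.mul_one]
    rw [hMM]
    abel
  -- trace of the projection
  have htr : ∑ i, Pr i i = (n : ℝ) - (p : ℝ) := by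
    have h2 : Matrix.trace (X * (Xᵀ * X)⁻¹ * Xᵀ) = (p : ℝ) := by
      rw [Matrix.mul_assoc, Matrix.trace_mul_comm, Matrix.mul_assoc, h1, Matrix.trace_one]
      simp
    have h3 : Matrix.trace Pr = (n : ℝ) - (p : ℝ) := by
      rw [hPr, Matrix.trace_sub, Matrix.trace_one, h2]
      simp
    simpa [Matrix.trace, Matrix.diag] using h3
  -- sum of squared residuals
  have hrr : dotProduct (Pr.mulVec y) (Pr.mulVec y)
      = dotProduct y (Pr.mulVec y) := by
    rw [Matrix.dotProduct_mulVec]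
    have h3 : (Pr.mulVec y) ᵥ* Pr = Pr.mulVec (Pr.mulVec y) := by
      rw [← Matrix.mulVec_transpose, hsymm]
    rw [h3, Matrix.mulVec_mulVec, hPP, dotProduct_comm]
  -- the key pointwise computations
  have key : ∀ i : Fin n,
      pderiv' l i y = -((n : ℝ) - (p : ℝ)) * (Pr.mulVec y i) /
          dotProduct y (Pr.mulVec y) ∧
      pderiv' (pderiv' l i) i y = ((n : ℝ) - (p : ℝ)) *
          (2 * (Pr.mulVec y i) ^ 2 / (dotProduct y (Pr.mulVec y)) ^ 2
            - Pr i i / dotProduct y (Pr.mulVec y)) := by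
    intro i
    set c : ℝ := (n : ℝ) - (p : ℝ) with hc
    set R : ℝ := dotProduct y (Pr.mulVec y) with hRdef
    set ri : ℝ := Pr.mulVec y i with hri
    set a : ℝ := y i with ha
    set Q : ℝ → ℝ := fun t => R + 2 * (t - a) * ri + (t - a) ^ 2 * Pr i i with hQ
    have hupd : ∀ t, Function.update y i t = y + (t - a) • (Pi.single i 1 : Fin n → ℝ) := by
      intro t; funext j
      by_cases hj : j = i
      · subst hj
        simp
        rw [ha]; ring
      · simp [Function.update_of_ne hj, Pi.single_eq_of_ne hj]
    have hcross1 : dotProduct y (Pr.mulVec ((Pi.single i 1 : Fin n → ℝ))) = ri := by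
      rw [Matrix.dotProduct_mulVec]
      have hvm : y ᵥ* Pr = Pr.mulVec y := by rw [← Matrix.mulVec_transpose, hsymm]
      rw [hvm, dotProduct_single, mul_one]
    have hcross2 : dotProduct ((Pi.single i 1 : Fin n → ℝ)) (Pr.mulVec y) = ri := by
      rw [single_dotProduct, one_mul]
    have hcross3 : dotProduct ((Pi.single i 1 : Fin n → ℝ)) (Pr.mulVec ((Pi.single i 1 : Fin n → ℝ))) = Pr i i := by
      rw [Matrix.mulVec_single, single_dotProduct]
      simp
    have hq : ∀ t, dotProduct (Function.update y i t)
        (Pr.mulVec (Function.update y i t)) = Q t := by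
      intro t
      rw [hupd t]
      simp only [Matrix.mulVec_add, Matrix.mulVec_smul, dotProduct_add,
        add_dotProduct, dotProduct_smul, smul_dotProduct,
        smul_eq_mul, hcross1, hcross2, hcross3]
      simp only [hQ]
      ring
    have hQ' : ∀ t, HasDerivAt Q (2 * ri + 2 * (t - a) * Pr i i) t := by
      intro t
      have h1t : HasDerivAt (fun t : ℝ => t - a) 1 t := (hasDerivAt_id t).sub_const a
      have h2t : HasDerivAt (fun t : ℝ => 2 * (t - a) * ri) (2 * 1 * ri) t :=
        (h1t.const_mul 2).mul_const ri
      have h3t : HasDerivAt (fun t : ℝ => (t - a) ^ 2 * Pr i i)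
          (((2 : ℕ) * (t - a) ^ (2 - 1) * 1) * Pr i i) t := (h1t.pow 2).mul_const _
      have htot := ((hasDerivAt_const t R).add h2t).add h3t
      rw [hQ]
      exact htot.congr_deriv (by push_cast; ring)
    have hQa : Q a = R := by simp [hQ]
    have hQapos : 0 < Q a := by rw [hQa]; exact hRSS
    have hFfun : (fun s => l (Function.update y i s)) = fun t => -(c / 2) * Real.log (Q t) := by
      funext t
      rw [hl, hq]
    have hFderiv : ∀ t, 0 < Q t → HasDerivAt (fun s => l (Function.update y i s))
        (-(c / 2) * ((Q t)⁻¹ * (2 * ri + 2 * (t - a) * Pr i i))) t := by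
      intro t ht
      rw [hFfun]
      exact ((Real.hasDerivAt_log ht.ne').comp t (hQ' t)).const_mul _
    have hpd1 : pderiv' l i y = -c * ri / R := by
      have hdef : pderiv' l i y = deriv (fun t => l (Function.update y i t)) (y i) := rfl
      rw [hdef, ← ha, (hFderiv a hQapos).deriv, hQa]
      field_simp
      ring
    constructor
    · exact hpd1
    · -- second derivative
      have hcont : ContinuousAt Q a := (hQ' a).continuousAt
      have hposQ : ∀ᶠ t in nhds a, 0 < Q t := hcont.eventually (eventually_gt_nhds hQapos)
      have hEq : (fun t => deriv (fun s => l (Function.update y i s)) t) =ᶠ[nhds a]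
          (fun t => -c * (ri + (t - a) * Pr i i) / Q t) := by
        filter_upwards [hposQ] with t ht
        rw [(hFderiv t ht).deriv]
        field_simp
      have hN : HasDerivAt (fun t => -c * (ri + (t - a) * Pr i i)) (-c * (1 * Pr i i)) a := by
        exact HasDerivAt.const_mul (-c)
          ((((hasDerivAt_id a).sub_const a).mul_const (Pr i i)).const_add ri)
      have hG : HasDerivAt (fun t => -c * (ri + (t - a) * Pr i i) / Q t)
          (((-c * (1 * Pr i i)) * Q a - (-c * (ri + (a - a) * Pr i i)) *
            (2 * ri + 2 * (a - a) * Pr i i)) / Q a ^ 2) a :=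
        hN.div (hQ' a) hQapos.ne'
      have houter : (fun t => pderiv' l i (Function.update y i t)) =
          fun t => deriv (fun s => l (Function.update y i s)) t := by
        funext t
        show deriv (fun s => l (Function.update (Function.update y i t) i s))
            ((Function.update y i t) i) = _
        rw [Function.update_self]
        congr 1
        funext s
        rw [Function.update_idem]
      have hdef2 : pderiv' (pderiv' l i) i y =
          deriv (fun t => pderiv' l i (Function.update y i t)) (y i) := rfl
      rw [hdef2, ← ha, houter, hEq.deriv_eq, hG.deriv, hQa]
      field_simp
      ring
  refine ⟨fun i => (key i).1, fun i => (key i).2, ?_⟩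
  set c : ℝ := (n : ℝ) - (p : ℝ) with hc
  set R : ℝ := dotProduct y (Pr.mulVec y) with hRdef
  have hsum2 : ∑ i, (Pr.mulVec y i) ^ 2 = R := by
    simpa [dotProduct, pow_two] using hrr
  have hA : ∑ i, pderiv' (pderiv' l i) i y = (2 * c / R ^ 2) * R - (c / R) * c := by
    rw [Finset.sum_congr rfl fun i _ => (key i).2]
    have hterm : ∀ i : Fin n, c * (2 * (Pr.mulVec y i) ^ 2 / R ^ 2 - Pr i i / R)
        = (2 * c / R ^ 2) * (Pr.mulVec y i) ^ 2 - (c / R) * Pr i i := fun i => by ring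
    rw [Finset.sum_congr rfl fun i _ => hterm i, Finset.sum_sub_distrib,
      ← Finset.mul_sum, ← Finset.mul_sum, hsum2, htr]
  have hB : ∑ i, (pderiv' l i y) ^ 2 = (c ^ 2 / R ^ 2) * R := by
    rw [Finset.sum_congr rfl fun i _ => by rw [(key i).1]]
    have hterm : ∀ i : Fin n, (-c * (Pr.mulVec y i) / R) ^ 2
        = (c ^ 2 / R ^ 2) * (Pr.mulVec y i) ^ 2 := fun i => by ring
    rw [Finset.sum_congr rfl fun i _ => hterm i, ← Finset.mul_sum, hsum2]
  rw [hA, hB]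
  have hR0 : R ≠ 0 := hRSS.ne'
  field_simp
  ring
end

section
/- Let Z₁, Z₂, … be i.i.d. N(0,σ²), Uᵢ = Zᵢ²/σ² − 1, Ū_i the running mean. For i < j, Cov(Ū_i², Ū_j²) = (i/j)² Var(Ū_i²), and Var(Ū_i²) = 8/i² + 48/i³. Consequently Var(Σ_{i=1}^n Ū_i²) = O(log n). -/
open MeasureTheory ProbabilityTheory Finset

section AuxLemmas
open Real


lemma int_pow_gauss {b : ℝ} (hb : 0 < b) (n : ℕ) :
    Integrable (fun x : ℝ => x ^ n * Real.exp (-b * x ^ 2)) := by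
  have h := integrable_rpow_mul_exp_neg_mul_sq hb (s := n)
    (lt_of_lt_of_le neg_one_lt_zero (Nat.cast_nonneg n))
  refine h.congr ?_
  filter_upwards with x
  rw [Real.rpow_natCast]

lemma gauss_rec {b : ℝ} (hb : 0 < b) (n : ℕ) :
    ∫ x : ℝ, x ^ (n + 2) * Real.exp (-b * x ^ 2)
      = ((n + 1 : ℝ) / (2 * b)) * ∫ x : ℝ, x ^ n * Real.exp (-b * x ^ 2) := by
  have hderiv_u : ∀ x : ℝ, HasDerivAt (fun x : ℝ => x ^ (n + 1))
      (((n : ℝ) + 1) * x ^ n) x := by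
    intro x
    simpa using hasDerivAt_pow (n + 1) x
  have hderiv_v : ∀ x : ℝ, HasDerivAt (fun x : ℝ => -(2 * b)⁻¹ * Real.exp (-b * x ^ 2))
      (x * Real.exp (-b * x ^ 2)) x := by
    intro x
    have h1 : HasDerivAt (fun x : ℝ => -b * x ^ 2) (-b * (2 * x)) x := by
      simpa using ((hasDerivAt_pow 2 x).const_mul (-b))
    have h2 := (Real.hasDerivAt_exp (-b * x ^ 2)).comp x h1
    have h3 := h2.const_mul (-(2 * b)⁻¹)
    refine HasDerivAt.congr_deriv h3 ?_
    field_simp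
  have key := integral_mul_deriv_eq_deriv_mul_of_integrable (fun x _ => hderiv_u x) (fun x _ => hderiv_v x)
    ?_ ?_ ?_
  · rw [show ∫ x : ℝ, x ^ (n+2) * Real.exp (-b * x ^ 2)
        = ∫ x : ℝ, x ^ (n+1) * (x * Real.exp (-b * x ^ 2)) by
        congr 1; funext x; ring]
    rw [key]
    rw [← integral_neg]
    rw [show (fun x : ℝ => -((((n:ℝ)+1) * x ^ n) * (-(2*b)⁻¹ * Real.exp (-b * x^2))))
        = (fun x : ℝ => ((n+1:ℝ)/(2*b)) * (x ^ n * Real.exp (-b * x^2))) by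
        funext x; field_simp]
    rw [integral_const_mul]
  · refine ((int_pow_gauss hb (n+2)).congr ?_)
    filter_upwards with x
    simp only [Pi.mul_apply]
    ring_nf
  · refine (((int_pow_gauss hb n).const_mul (((n:ℝ)+1) * (-(2*b)⁻¹))).congr ?_)
    filter_upwards with x
    simp only [Pi.mul_apply]
    ring_nf
  · refine (((int_pow_gauss hb (n+1)).const_mul (-(2*b)⁻¹)).congr ?_)
    filter_upwards with x
    simp only [Pi.mul_apply]
    ring_nf

lemma gaussianReal_integral_eq (σ : ℝ) (hσ : 0 < σ) (g : ℝ → ℝ) :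
    ∫ x, g x ∂(gaussianReal 0 ⟨σ ^ 2, sq_nonneg σ⟩)
      = ∫ x, gaussianPDFReal 0 ⟨σ ^ 2, sq_nonneg σ⟩ x * g x := by
  have hv : (⟨σ ^ 2, sq_nonneg σ⟩ : NNReal) ≠ 0 := by
    exact fun h => (pow_ne_zero 2 hσ.ne') (congrArg NNReal.toReal h)
  rw [integral_gaussianReal_eq_integral_smul hv]
  rfl

lemma int_pow_gauss' {b : ℝ} (hb : 0 < b) (n : ℕ) :
    Integrable (fun x : ℝ => x ^ n * Real.exp (-b * x ^ 2)) := by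
  have h := integrable_rpow_mul_exp_neg_mul_sq hb (s := n)
    (lt_of_lt_of_le neg_one_lt_zero (Nat.cast_nonneg n))
  refine h.congr ?_
  filter_upwards with x
  rw [Real.rpow_natCast]

lemma gaussianPDFReal_eq (σ : ℝ) (hσ : 0 < σ) (x : ℝ) :
    gaussianPDFReal 0 ⟨σ ^ 2, sq_nonneg σ⟩ x
      = (Real.sqrt (2 * Real.pi * σ ^ 2))⁻¹ * Real.exp (-(2 * σ ^ 2)⁻¹ * x ^ 2) := by
  unfold gaussianPDFReal
  simp only [NNReal.coe_mk, sub_zero]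
  congr 1
  change Real.exp (-x ^ 2 / (2 * σ ^ 2)) = _
  congr 1; ring

lemma integrable_pow_gaussianReal (σ : ℝ) (hσ : 0 < σ) (n : ℕ) :
    Integrable (fun x : ℝ => x ^ n) (gaussianReal 0 ⟨σ ^ 2, sq_nonneg σ⟩) := by
  have hv : (⟨σ ^ 2, sq_nonneg σ⟩ : NNReal) ≠ 0 :=
    fun h => (pow_ne_zero 2 hσ.ne') (congrArg NNReal.toReal h)
  have hb : (0:ℝ) < (2 * σ ^ 2)⁻¹ := by positivity
  rw [gaussianReal_of_var_ne_zero 0 hv]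
  rw [show gaussianPDF 0 ⟨σ ^ 2, sq_nonneg σ⟩
      = fun x => ((gaussianPDFReal 0 ⟨σ ^ 2, sq_nonneg σ⟩ x).toNNReal : ENNReal) from rfl]
  rw [integrable_withDensity_iff_integrable_smul
    (f := fun x => (gaussianPDFReal 0 (⟨σ ^ 2, sq_nonneg σ⟩ : NNReal) x).toNNReal)
    ((measurable_gaussianPDFReal 0 _).real_toNNReal)]
  refine (((int_pow_gauss' hb n).const_mul ((Real.sqrt (2 * Real.pi * σ ^ 2))⁻¹)).congr ?_)
  filter_upwards with x
  rw [NNReal.smul_def, smul_eq_mul]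
  erw [Real.coe_toNNReal _ (gaussianPDFReal_nonneg _ _ _),
    gaussianPDFReal_eq σ hσ]
  ring

lemma gaussianReal_moment_rec (σ : ℝ) (hσ : 0 < σ) (n : ℕ) :
    ∫ x, x ^ (n + 2) ∂(gaussianReal 0 ⟨σ ^ 2, sq_nonneg σ⟩)
      = ((n : ℝ) + 1) * σ ^ 2 * ∫ x, x ^ n ∂(gaussianReal 0 ⟨σ ^ 2, sq_nonneg σ⟩) := by
  have hb : (0:ℝ) < (2 * σ ^ 2)⁻¹ := by positivity
  rw [gaussianReal_integral_eq σ hσ, gaussianReal_integral_eq σ hσ]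
  have rw1 : ∀ m : ℕ, (fun x => gaussianPDFReal 0 ⟨σ ^ 2, sq_nonneg σ⟩ x * x ^ m)
      = fun x => (Real.sqrt (2 * Real.pi * σ ^ 2))⁻¹
          * (x ^ m * Real.exp (-(2 * σ ^ 2)⁻¹ * x ^ 2)) := by
    intro m; funext x; rw [gaussianPDFReal_eq σ hσ]; ring
  rw [rw1, rw1, integral_const_mul, integral_const_mul, gauss_rec hb n]
  rw [show ((n:ℝ) + 1) / (2 * (2 * σ ^ 2)⁻¹) = ((n:ℝ) + 1) * σ ^ 2 by
    field_simp]
  ring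

lemma gaussianReal_even_moments (σ : ℝ) (hσ : 0 < σ) :
    (∫ x, x ^ 2 ∂(gaussianReal 0 ⟨σ ^ 2, sq_nonneg σ⟩) = σ ^ 2)
    ∧ (∫ x, x ^ 4 ∂(gaussianReal 0 ⟨σ ^ 2, sq_nonneg σ⟩) = 3 * σ ^ 4)
    ∧ (∫ x, x ^ 6 ∂(gaussianReal 0 ⟨σ ^ 2, sq_nonneg σ⟩) = 15 * σ ^ 6)
    ∧ (∫ x, x ^ 8 ∂(gaussianReal 0 ⟨σ ^ 2, sq_nonneg σ⟩) = 105 * σ ^ 8) := by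
  have hv : (⟨σ ^ 2, sq_nonneg σ⟩ : NNReal) ≠ 0 :=
    fun h => (pow_ne_zero 2 hσ.ne') (congrArg NNReal.toReal h)
  have h0 : ∫ x, x ^ 0 ∂(gaussianReal 0 ⟨σ ^ 2, sq_nonneg σ⟩) = 1 := by
    simp only [pow_zero, integral_const, smul_eq_mul, mul_one]
    exact @probReal_univ _ _ _ (instIsProbabilityMeasureGaussianReal 0 ⟨σ ^ 2, sq_nonneg σ⟩)
  have h2 := gaussianReal_moment_rec σ hσ 0
  rw [h0] at h2
  norm_num at h2
  have h4 := gaussianReal_moment_rec σ hσ 2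
  rw [h2] at h4
  norm_num at h4
  have h6 := gaussianReal_moment_rec σ hσ 4
  rw [h4] at h6
  norm_num at h6
  have h8 := gaussianReal_moment_rec σ hσ 6
  rw [h6] at h8
  norm_num at h8
  refine ⟨h2, by rw [h4]; ring, by rw [h6]; ring, by rw [h8]; ring⟩


lemma indep_pow_integral {Ω : Type*} [MeasurableSpace Ω] {μ : Measure Ω}
    {X Y : Ω → ℝ} (h : IndepFun X Y μ) (p q : ℕ)
    (hXp : Integrable (fun ω => X ω ^ p) μ) (hYq : Integrable (fun ω => Y ω ^ q) μ) :
    Integrable (fun ω => X ω ^ p * Y ω ^ q) μ ∧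
      ∫ ω, X ω ^ p * Y ω ^ q ∂μ = (∫ ω, X ω ^ p ∂μ) * (∫ ω, Y ω ^ q ∂μ) := by
  have hpq : IndepFun (fun ω => X ω ^ p) (fun ω => Y ω ^ q) μ :=
    h.comp (measurable_id.pow_const p) (measurable_id.pow_const q)
  exact ⟨hpq.integrable_mul hXp hYq, hpq.integral_fun_mul_eq_mul_integral hXp.1 hYq.1⟩

lemma indep_sums {Ω : Type*} [MeasurableSpace Ω] {μ : Measure Ω}
    {U : ℕ → Ω → ℝ} (h : iIndepFun U μ)
    (hm : ∀ i, Measurable (U i)) {s t : Finset ℕ} (hst : Disjoint s t) :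
    IndepFun (fun ω => ∑ j ∈ s, U j ω) (fun ω => ∑ j ∈ t, U j ω) μ := by
  classical
  have h1 := h.indepFun_finset s t hst hm
  have h2 := h1.comp (φ := fun v : (∀ _ : {x // x ∈ s}, ℝ) => ∑ i, v i)
    (ψ := fun v : (∀ _ : {x // x ∈ t}, ℝ) => ∑ i, v i)
    (Finset.measurable_sum Finset.univ (fun i _ => measurable_pi_apply i))
    (Finset.measurable_sum Finset.univ (fun i _ => measurable_pi_apply i))
  have e1 : (fun ω => ∑ j ∈ s, U j ω)
      = ((fun v : (∀ _ : {x // x ∈ s}, ℝ) => ∑ i, v i) ∘ (fun a (i : {x // x ∈ s}) => U i a)) := by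
    funext ω
    exact (Finset.sum_coe_sort s (fun j => U j ω)).symm
  have e2 : (fun ω => ∑ j ∈ t, U j ω)
      = ((fun v : (∀ _ : {x // x ∈ t}, ℝ) => ∑ i, v i) ∘ (fun a (i : {x // x ∈ t}) => U i a)) := by
    funext ω
    exact (Finset.sum_coe_sort t (fun j => U j ω)).symm
  rw [e1, e2]
  exact h2

lemma sum_moments {Ω : Type*} [MeasurableSpace Ω] {μ : Measure Ω}
    [IsProbabilityMeasure μ] {X Y : Ω → ℝ} (h : IndepFun X Y μ)
    (hXk : ∀ k, k ≤ 4 → Integrable (fun ω => X ω ^ k) μ)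
    (hYk : ∀ k, k ≤ 4 → Integrable (fun ω => Y ω ^ k) μ) :
    (∀ k, k ≤ 4 → Integrable (fun ω => (X ω + Y ω) ^ k) μ) ∧
    (∫ ω, (X ω + Y ω) ^ 1 ∂μ = (∫ ω, X ω ^ 1 ∂μ) + ∫ ω, Y ω ^ 1 ∂μ) ∧
    (∫ ω, (X ω + Y ω) ^ 2 ∂μ
      = (∫ ω, X ω ^ 2 ∂μ) + 2 * (∫ ω, X ω ^ 1 ∂μ) * (∫ ω, Y ω ^ 1 ∂μ)
        + ∫ ω, Y ω ^ 2 ∂μ) ∧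
    (∫ ω, (X ω + Y ω) ^ 3 ∂μ
      = (∫ ω, X ω ^ 3 ∂μ) + 3 * (∫ ω, X ω ^ 2 ∂μ) * (∫ ω, Y ω ^ 1 ∂μ)
        + 3 * (∫ ω, X ω ^ 1 ∂μ) * (∫ ω, Y ω ^ 2 ∂μ) + ∫ ω, Y ω ^ 3 ∂μ) ∧
    (∫ ω, (X ω + Y ω) ^ 4 ∂μ
      = (∫ ω, X ω ^ 4 ∂μ) + 4 * (∫ ω, X ω ^ 3 ∂μ) * (∫ ω, Y ω ^ 1 ∂μ)
        + 6 * (∫ ω, X ω ^ 2 ∂μ) * (∫ ω, Y ω ^ 2 ∂μ)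
        + 4 * (∫ ω, X ω ^ 1 ∂μ) * (∫ ω, Y ω ^ 3 ∂μ) + ∫ ω, Y ω ^ 4 ∂μ) ∧
    (Integrable (fun ω => X ω ^ 2 * (X ω + Y ω) ^ 2) μ) ∧
    (∫ ω, X ω ^ 2 * (X ω + Y ω) ^ 2 ∂μ
      = (∫ ω, X ω ^ 4 ∂μ) + 2 * (∫ ω, X ω ^ 3 ∂μ) * (∫ ω, Y ω ^ 1 ∂μ)
        + (∫ ω, X ω ^ 2 ∂μ) * (∫ ω, Y ω ^ 2 ∂μ)) := by
  have cast : ∀ {f g : Ω → ℝ}, Integrable f μ → (∀ ω, f ω = g ω) → Integrable g μ :=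
    fun hf he => hf.congr (Filter.Eventually.of_forall he)
  have I : ∀ p q : ℕ, p ≤ 4 → q ≤ 4 →
      Integrable (fun ω => X ω ^ p * Y ω ^ q) μ ∧
      ∫ ω, X ω ^ p * Y ω ^ q ∂μ = (∫ ω, X ω ^ p ∂μ) * (∫ ω, Y ω ^ q ∂μ) :=
    fun p q hp hq => indep_pow_integral h p q (hXk p hp) (hYk q hq)
  have int11 := (I 1 1 (by norm_num) (by norm_num)).1
  have int21 := (I 2 1 (by norm_num) (by norm_num)).1
  have int12 := (I 1 2 (by norm_num) (by norm_num)).1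
  have int31 := (I 3 1 (by norm_num) (by norm_num)).1
  have int22 := (I 2 2 (by norm_num) (by norm_num)).1
  have int13 := (I 1 3 (by norm_num) (by norm_num)).1
  have c11 : Integrable (fun ω => 2 * (X ω ^ 1 * Y ω ^ 1)) μ := int11.const_mul 2
  have c21 : Integrable (fun ω => 3 * (X ω ^ 2 * Y ω ^ 1)) μ := int21.const_mul 3
  have c12 : Integrable (fun ω => 3 * (X ω ^ 1 * Y ω ^ 2)) μ := int12.const_mul 3
  have c31 : Integrable (fun ω => 4 * (X ω ^ 3 * Y ω ^ 1)) μ := int31.const_mul 4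
  have c31' : Integrable (fun ω => 2 * (X ω ^ 3 * Y ω ^ 1)) μ := int31.const_mul 2
  have c22 : Integrable (fun ω => 6 * (X ω ^ 2 * Y ω ^ 2)) μ := int22.const_mul 6
  have c13 : Integrable (fun ω => 4 * (X ω ^ 1 * Y ω ^ 3)) μ := int13.const_mul 4
  have iA2 : Integrable (fun ω => X ω ^ 2 + 2 * (X ω ^ 1 * Y ω ^ 1)) μ :=
    cast ((hXk 2 (by norm_num)).add c11) (fun ω => by simp only [Pi.add_apply])
  have iA3 : Integrable (fun ω => X ω ^ 3 + 3 * (X ω ^ 2 * Y ω ^ 1)) μ :=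
    cast ((hXk 3 (by norm_num)).add c21) (fun ω => by simp only [Pi.add_apply])
  have iA3' : Integrable (fun ω => X ω ^ 3 + 3 * (X ω ^ 2 * Y ω ^ 1)
      + 3 * (X ω ^ 1 * Y ω ^ 2)) μ :=
    cast (iA3.add c12) (fun ω => by simp only [Pi.add_apply])
  have iA4 : Integrable (fun ω => X ω ^ 4 + 4 * (X ω ^ 3 * Y ω ^ 1)) μ :=
    cast ((hXk 4 (by norm_num)).add c31) (fun ω => by simp only [Pi.add_apply])
  have iA4' : Integrable (fun ω => X ω ^ 4 + 4 * (X ω ^ 3 * Y ω ^ 1)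
      + 6 * (X ω ^ 2 * Y ω ^ 2)) μ :=
    cast (iA4.add c22) (fun ω => by simp only [Pi.add_apply])
  have iA4'' : Integrable (fun ω => X ω ^ 4 + 4 * (X ω ^ 3 * Y ω ^ 1)
      + 6 * (X ω ^ 2 * Y ω ^ 2) + 4 * (X ω ^ 1 * Y ω ^ 3)) μ :=
    cast (iA4'.add c13) (fun ω => by simp only [Pi.add_apply])
  have iB4 : Integrable (fun ω => X ω ^ 4 + 2 * (X ω ^ 3 * Y ω ^ 1)) μ :=
    cast ((hXk 4 (by norm_num)).add c31') (fun ω => by simp only [Pi.add_apply])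
  have hint : ∀ k, k ≤ 4 → Integrable (fun ω => (X ω + Y ω) ^ k) μ := by
    intro k hk
    interval_cases k
    · simpa using (integrable_const (1:ℝ))
    · exact cast (((hXk 1 (by norm_num))).add (hYk 1 (by norm_num)))
        (fun ω => by simp only [Pi.add_apply]; ring)
    · exact cast (iA2.add (hYk 2 (by norm_num)))
        (fun ω => by simp only [Pi.add_apply]; ring)
    · exact cast (iA3'.add (hYk 3 (by norm_num)))
        (fun ω => by simp only [Pi.add_apply]; ring)
    · exact cast (iA4''.add (hYk 4 (by norm_num)))
        (fun ω => by simp only [Pi.add_apply]; ring)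
  refine ⟨hint, ?_, ?_, ?_, ?_, ?_, ?_⟩
  · simp only [pow_one]
    exact integral_add (by simpa using hXk 1 (by norm_num)) (by simpa using hYk 1 (by norm_num))
  · rw [show (fun ω => (X ω + Y ω) ^ 2)
        = fun ω => X ω ^ 2 + 2 * (X ω ^ 1 * Y ω ^ 1) + Y ω ^ 2 from
        funext (fun ω => by ring)]
    rw [integral_add iA2 (hYk 2 (by norm_num)),
      integral_add (hXk 2 (by norm_num)) c11,
      integral_const_mul, (I 1 1 (by norm_num) (by norm_num)).2]
    ring
  · rw [show (fun ω => (X ω + Y ω) ^ 3)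
        = fun ω => X ω ^ 3 + 3 * (X ω ^ 2 * Y ω ^ 1) + 3 * (X ω ^ 1 * Y ω ^ 2) + Y ω ^ 3 from
        funext (fun ω => by ring)]
    rw [integral_add iA3' (hYk 3 (by norm_num)),
      integral_add iA3 c12,
      integral_add (hXk 3 (by norm_num)) c21,
      integral_const_mul, integral_const_mul,
      (I 2 1 (by norm_num) (by norm_num)).2, (I 1 2 (by norm_num) (by norm_num)).2]
    ring
  · rw [show (fun ω => (X ω + Y ω) ^ 4)
        = fun ω => X ω ^ 4 + 4 * (X ω ^ 3 * Y ω ^ 1) + 6 * (X ω ^ 2 * Y ω ^ 2)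
          + 4 * (X ω ^ 1 * Y ω ^ 3) + Y ω ^ 4 from funext (fun ω => by ring)]
    rw [integral_add iA4'' (hYk 4 (by norm_num)),
      integral_add iA4' c13,
      integral_add iA4 c22,
      integral_add (hXk 4 (by norm_num)) c31,
      integral_const_mul, integral_const_mul, integral_const_mul,
      (I 3 1 (by norm_num) (by norm_num)).2, (I 2 2 (by norm_num) (by norm_num)).2,
      (I 1 3 (by norm_num) (by norm_num)).2]
    ring
  · exact cast (iB4.add int22) (fun ω => by simp only [Pi.add_apply]; ring)
  · rw [show (fun ω => X ω ^ 2 * (X ω + Y ω) ^ 2)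
        = fun ω => X ω ^ 4 + 2 * (X ω ^ 3 * Y ω ^ 1) + X ω ^ 2 * Y ω ^ 2 from
        funext (fun ω => by ring)]
    rw [integral_add iB4 int22,
      integral_add (hXk 4 (by norm_num)) c31',
      integral_const_mul,
      (I 3 1 (by norm_num) (by norm_num)).2, (I 2 2 (by norm_num) (by norm_num)).2]
    ring


lemma sum_max_inv_sq (j : ℕ) (hj : 1 ≤ j) :
    ∀ n : ℕ, (∑ i ∈ Icc 1 n, (1:ℝ) / ((max i j : ℕ) : ℝ) ^ 2)
      ≤ ((min n j : ℕ) : ℝ) / (j : ℝ) ^ 2 + (1 / (j : ℝ) - 1 / ((max j n : ℕ) : ℝ)) := by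
  have hj' : (0:ℝ) < j := by exact_mod_cast hj
  intro n
  induction n with
  | zero => simp
  | succ n ih =>
    rw [Finset.sum_Icc_succ_top (by omega)]
    have hcast : ((n+1 : ℕ) : ℝ) = (n:ℝ) + 1 := by push_cast; ring
    rcases le_or_gt (n+1) j with hc | hc
    · have h1 : max (n+1) j = j := max_eq_right hc
      have h2 : min (n+1) j = n+1 := min_eq_left hc
      have h3 : max j (n+1) = j := max_eq_left hc
      have h4 : min n j = n := min_eq_left (by omega)
      have h5 : max j n = j := max_eq_left (by omega)
      rw [h1, h2, h3, hcast]
      rw [h4, h5] at ih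
      have e : ((n:ℝ)+1)/(j:ℝ)^2 = (n:ℝ)/(j:ℝ)^2 + 1/(j:ℝ)^2 := by ring
      rw [e]
      linarith
    · have hn : j ≤ n := by omega
      have hn' : (0:ℝ) < n := lt_of_lt_of_le hj' (by exact_mod_cast hn)
      have h1 : max (n+1) j = n+1 := max_eq_left (by omega)
      have h2 : min (n+1) j = j := min_eq_right (by omega)
      have h3 : max j (n+1) = n+1 := max_eq_right (by omega)
      have h4 : min n j = j := min_eq_right hn
      have h5 : max j n = n := max_eq_right hn
      rw [h1, h2, h3, hcast]
      rw [h4, h5] at ih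
      have step : (1:ℝ)/((n:ℝ)+1)^2 ≤ 1/(n:ℝ) - 1/((n:ℝ)+1) := by
        rw [div_sub_div _ _ (ne_of_gt hn') (by positivity)]
        rw [div_le_div_iff₀ (by positivity) (by positivity)]
        nlinarith
      linarith

lemma sum_max_inv_sq' (j : ℕ) (hj : 1 ≤ j) (n : ℕ) :
    (∑ i ∈ Icc 1 n, (1:ℝ) / ((max i j : ℕ) : ℝ) ^ 2) ≤ 2 / (j : ℝ) := by
  have hj' : (0:ℝ) < j := by exact_mod_cast hj
  refine (sum_max_inv_sq j hj n).trans ?_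
  have h1 : ((min n j : ℕ) : ℝ) ≤ (j:ℝ) := by exact_mod_cast min_le_right n j
  have h2 : (0:ℝ) < ((max j n : ℕ):ℝ) := by
    have : 1 ≤ max j n := le_trans hj (le_max_left _ _)
    exact_mod_cast Nat.lt_of_lt_of_le Nat.zero_lt_one this
  have h3 : ((min n j : ℕ) : ℝ) / (j:ℝ)^2 ≤ 1 / (j:ℝ) := by
    rw [div_le_div_iff₀ (by positivity) hj']
    nlinarith
  have h4 : (0:ℝ) ≤ 1 / ((max j n : ℕ):ℝ) := by positivity
  have : 1/(j:ℝ) + 1/(j:ℝ) = 2/(j:ℝ) := by ring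
  linarith

lemma sum_inv_Icc_eq_harmonic (n : ℕ) :
    (∑ i ∈ Icc 1 n, (1:ℝ) / (i : ℝ)) = (harmonic n : ℝ) := by
  induction n with
  | zero => simp
  | succ n ih =>
    rw [Finset.sum_Icc_succ_top (by omega), ih, harmonic_succ]
    push_cast
    ring

end AuxLemmas

/-- For `Z₁, Z₂, …` i.i.d. `N(0,σ²)`, `Uᵢ = Zᵢ²/σ² − 1`, and running means
`Ū_i`: for `i < j`, `Cov(Ū_i², Ū_j²) = (i/j)² Var(Ū_i²)`, with
`Var(Ū_i²) = 8/i² + 48/i³`; consequently `Var(Σ_{i=1}^n Ū_i²) = O(log n)`. -/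

theorem running_mean_square_variance {Ω : Type*} [MeasurableSpace Ω]
    (μ : Measure Ω) [IsProbabilityMeasure μ]
    (σ : ℝ) (hσ : 0 < σ)
    (Z : ℕ → Ω → ℝ)
    (hmeas : ∀ i, Measurable (Z i))
    (hindep : iIndepFun Z μ)
    (hZ : ∀ i, Measure.map (Z i) μ = gaussianReal 0 ⟨σ ^ 2, sq_nonneg σ⟩)
    (U : ℕ → Ω → ℝ) (hU : ∀ i ω, U i ω = (Z i ω) ^ 2 / σ ^ 2 - 1)
    (Ubar : ℕ → Ω → ℝ)
    (hUbar : ∀ i ω, Ubar i ω = (1 / (i : ℝ)) * ∑ j ∈ Icc 1 i, U j ω) :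
    -- covariance identity for i < j
    (∀ i j : ℕ, 0 < i → i < j →
      (∫ ω, (Ubar i ω) ^ 2 * (Ubar j ω) ^ 2 ∂μ)
          - (∫ ω, (Ubar i ω) ^ 2 ∂μ) * (∫ ω, (Ubar j ω) ^ 2 ∂μ)
        = ((i : ℝ) / (j : ℝ)) ^ 2 *
            ((∫ ω, ((Ubar i ω) ^ 2) ^ 2 ∂μ) - (∫ ω, (Ubar i ω) ^ 2 ∂μ) ^ 2)) ∧
    -- variance of `Ū_i²`
    (∀ i : ℕ, 0 < i →
      (∫ ω, ((Ubar i ω) ^ 2) ^ 2 ∂μ) - (∫ ω, (Ubar i ω) ^ 2 ∂μ) ^ 2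
        = 8 / (i : ℝ) ^ 2 + 48 / (i : ℝ) ^ 3) ∧
    -- `Var(Σ_{i=1}^n Ū_i²) = O(log n)`
    (∃ C : ℝ, ∀ n : ℕ, 2 ≤ n →
      (∫ ω, (∑ i ∈ Icc 1 n, (Ubar i ω) ^ 2) ^ 2 ∂μ)
          - (∫ ω, ∑ i ∈ Icc 1 n, (Ubar i ω) ^ 2 ∂μ) ^ 2
        ≤ C * Real.log n) := by
  classical
  have hσ2 : (σ:ℝ) ^ 2 ≠ 0 := pow_ne_zero 2 hσ.ne'
  have cast : ∀ {f g : Ω → ℝ}, Integrable f μ → (∀ ω, f ω = g ω) → Integrable g μ :=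
    fun hf he => hf.congr (Filter.Eventually.of_forall he)
  -- moments of Z
  have hZint : ∀ i (n : ℕ), Integrable (fun ω => Z i ω ^ n) μ := by
    intro i n
    have h1 : Integrable (fun x : ℝ => x ^ n) (Measure.map (Z i) μ) := by
      rw [hZ i]; exact integrable_pow_gaussianReal σ hσ n
    exact (integrable_map_measure
      ((measurable_id.pow_const n).aestronglyMeasurable) (hmeas i).aemeasurable).mp h1
  have hZmom : ∀ i (m : ℕ), ∫ ω, Z i ω ^ m ∂μ
      = ∫ x, x ^ m ∂(gaussianReal 0 ⟨σ ^ 2, sq_nonneg σ⟩) := by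
    intro i m
    rw [← hZ i, integral_map (f := fun x => x ^ m) (hmeas i).aemeasurable
      ((measurable_id.pow_const m).aestronglyMeasurable)]
  obtain ⟨g2, g4, g6, g8⟩ := gaussianReal_even_moments σ hσ
  -- measurability and independence of U
  have hUeq : U = fun i => (fun x : ℝ => x ^ 2 / σ ^ 2 - 1) ∘ Z i :=
    funext fun i => funext fun ω => hU i ω
  have hUmeas : ∀ i, Measurable (U i) := by
    intro i
    rw [hUeq]
    exact (((measurable_id.pow_const 2).div_const _).sub measurable_const).comp (hmeas i)
  have hUindep : iIndepFun U μ := by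
    rw [hUeq]
    exact hindep.comp _
      (fun i => ((measurable_id.pow_const 2).div_const _).sub measurable_const)
  -- integrability of powers of U
  have a := (σ ^ 2)⁻¹
  have hUint : ∀ i k, k ≤ 4 → Integrable (fun ω => U i ω ^ k) μ := by
    intro i k hk
    interval_cases k
    · exact cast (integrable_const 1) (fun ω => by norm_num)
    · refine cast (((hZint i 2).const_mul (σ^2)⁻¹).sub (integrable_const 1)) (fun ω => ?_)
      simp only [Pi.sub_apply, Pi.add_apply, hU]; ring
    · refine cast ((((hZint i 4).const_mul ((σ^2)⁻¹^2)).sub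
        ((hZint i 2).const_mul (2*(σ^2)⁻¹))).add (integrable_const 1)) (fun ω => ?_)
      simp only [Pi.sub_apply, Pi.add_apply, hU]; ring
    · refine cast (((((hZint i 6).const_mul ((σ^2)⁻¹^3)).sub
        ((hZint i 4).const_mul (3*(σ^2)⁻¹^2))).add
        ((hZint i 2).const_mul (3*(σ^2)⁻¹))).sub (integrable_const 1)) (fun ω => ?_)
      simp only [Pi.sub_apply, Pi.add_apply, hU]; ring
    · refine cast ((((((hZint i 8).const_mul ((σ^2)⁻¹^4)).sub
        ((hZint i 6).const_mul (4*(σ^2)⁻¹^3))).add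
        ((hZint i 4).const_mul (6*(σ^2)⁻¹^2))).sub
        ((hZint i 2).const_mul (4*(σ^2)⁻¹))).add (integrable_const 1)) (fun ω => ?_)
      simp only [Pi.sub_apply, Pi.add_apply, hU]; ring
  have intc : ∀ c : ℝ, ∫ (_ : Ω), c ∂μ = c := by
    intro c; simp
  have hUmom1 : ∀ i, ∫ ω, U i ω ^ 1 ∂μ = 0 := by
    intro i
    rw [show (fun ω => U i ω ^ 1) = fun ω => (σ^2)⁻¹ * Z i ω ^ 2 - 1 from
      funext fun ω => by rw [hU i ω]; ring]
    rw [integral_sub ((hZint i 2).const_mul ((σ^2)⁻¹)) (integrable_const 1),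
      integral_const_mul, hZmom i 2, g2, intc]
    field_simp
    norm_num
  have hUmom2 : ∀ i, ∫ ω, U i ω ^ 2 ∂μ = 2 := by
    intro i
    rw [show (fun ω => U i ω ^ 2)
        = fun ω => (σ^2)⁻¹^2 * Z i ω ^ 4 - 2*(σ^2)⁻¹ * Z i ω ^ 2 + 1 from
      funext fun ω => by rw [hU i ω]; ring]
    have iS : Integrable (fun ω => (σ^2)⁻¹^2 * Z i ω ^ 4 - 2*(σ^2)⁻¹ * Z i ω ^ 2) μ :=
      cast (((hZint i 4).const_mul ((σ^2)⁻¹^2)).sub ((hZint i 2).const_mul (2*(σ^2)⁻¹)))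
        (fun ω => by simp only [Pi.sub_apply])
    rw [integral_add iS (integrable_const 1),
      integral_sub ((hZint i 4).const_mul ((σ^2)⁻¹^2)) ((hZint i 2).const_mul (2*(σ^2)⁻¹)),
      integral_const_mul, integral_const_mul, hZmom i 4, hZmom i 2, g4, g2, intc]
    field_simp
    ring
  have hUmom3 : ∀ i, ∫ ω, U i ω ^ 3 ∂μ = 8 := by
    intro i
    rw [show (fun ω => U i ω ^ 3)
        = fun ω => (σ^2)⁻¹^3 * Z i ω ^ 6 - 3*(σ^2)⁻¹^2 * Z i ω ^ 4
          + 3*(σ^2)⁻¹ * Z i ω ^ 2 - 1 from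
      funext fun ω => by rw [hU i ω]; ring]
    have i1 : Integrable (fun ω => (σ^2)⁻¹^3 * Z i ω ^ 6 - 3*(σ^2)⁻¹^2 * Z i ω ^ 4) μ :=
      cast (((hZint i 6).const_mul ((σ^2)⁻¹^3)).sub ((hZint i 4).const_mul (3*(σ^2)⁻¹^2)))
        (fun ω => by simp only [Pi.sub_apply])
    have i2 : Integrable (fun ω => (σ^2)⁻¹^3 * Z i ω ^ 6 - 3*(σ^2)⁻¹^2 * Z i ω ^ 4
        + 3*(σ^2)⁻¹ * Z i ω ^ 2) μ :=
      cast (i1.add ((hZint i 2).const_mul (3*(σ^2)⁻¹)))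
        (fun ω => by simp only [Pi.add_apply])
    rw [integral_sub i2 (integrable_const 1),
      integral_add i1 ((hZint i 2).const_mul (3*(σ^2)⁻¹)),
      integral_sub ((hZint i 6).const_mul ((σ^2)⁻¹^3)) ((hZint i 4).const_mul (3*(σ^2)⁻¹^2)),
      integral_const_mul, integral_const_mul, integral_const_mul,
      hZmom i 6, hZmom i 4, hZmom i 2, g6, g4, g2, intc]
    field_simp
    ring
  have hUmom4 : ∀ i, ∫ ω, U i ω ^ 4 ∂μ = 60 := by
    intro i
    rw [show (fun ω => U i ω ^ 4)
        = fun ω => (σ^2)⁻¹^4 * Z i ω ^ 8 - 4*(σ^2)⁻¹^3 * Z i ω ^ 6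
          + 6*(σ^2)⁻¹^2 * Z i ω ^ 4 - 4*(σ^2)⁻¹ * Z i ω ^ 2 + 1 from
      funext fun ω => by rw [hU i ω]; ring]
    have i1 : Integrable (fun ω => (σ^2)⁻¹^4 * Z i ω ^ 8 - 4*(σ^2)⁻¹^3 * Z i ω ^ 6) μ :=
      cast (((hZint i 8).const_mul ((σ^2)⁻¹^4)).sub ((hZint i 6).const_mul (4*(σ^2)⁻¹^3)))
        (fun ω => by simp only [Pi.sub_apply])
    have i2 : Integrable (fun ω => (σ^2)⁻¹^4 * Z i ω ^ 8 - 4*(σ^2)⁻¹^3 * Z i ω ^ 6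
        + 6*(σ^2)⁻¹^2 * Z i ω ^ 4) μ :=
      cast (i1.add ((hZint i 4).const_mul (6*(σ^2)⁻¹^2)))
        (fun ω => by simp only [Pi.add_apply])
    have i3 : Integrable (fun ω => (σ^2)⁻¹^4 * Z i ω ^ 8 - 4*(σ^2)⁻¹^3 * Z i ω ^ 6
        + 6*(σ^2)⁻¹^2 * Z i ω ^ 4 - 4*(σ^2)⁻¹ * Z i ω ^ 2) μ :=
      cast (i2.sub ((hZint i 2).const_mul (4*(σ^2)⁻¹)))
        (fun ω => by simp only [Pi.sub_apply])
    rw [integral_add i3 (integrable_const 1),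
      integral_sub i2 ((hZint i 2).const_mul (4*(σ^2)⁻¹)),
      integral_add i1 ((hZint i 4).const_mul (6*(σ^2)⁻¹^2)),
      integral_sub ((hZint i 8).const_mul ((σ^2)⁻¹^4)) ((hZint i 6).const_mul (4*(σ^2)⁻¹^3)),
      integral_const_mul, integral_const_mul, integral_const_mul, integral_const_mul,
      hZmom i 8, hZmom i 6, hZmom i 4, hZmom i 2, g8, g6, g4, g2, intc]
    field_simp
    ring
  -- moments of sums over finsets
  have key : ∀ s : Finset ℕ,
      (∀ k, k ≤ 4 → Integrable (fun ω => (∑ j ∈ s, U j ω) ^ k) μ) ∧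
      (∫ ω, (∑ j ∈ s, U j ω) ^ 1 ∂μ = 0) ∧
      (∫ ω, (∑ j ∈ s, U j ω) ^ 2 ∂μ = 2 * (s.card : ℝ)) ∧
      (∫ ω, (∑ j ∈ s, U j ω) ^ 3 ∂μ = 8 * (s.card : ℝ)) ∧
      (∫ ω, (∑ j ∈ s, U j ω) ^ 4 ∂μ
        = 12 * (s.card : ℝ) ^ 2 + 48 * (s.card : ℝ)) := by
    intro s
    induction s using Finset.cons_induction with
    | empty =>
      refine ⟨fun k hk => ?_, by simp, by simp, by simp, by simp⟩
      simp only [Finset.sum_empty]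
      exact integrable_const _
    | cons b t hb ih =>
      have hXY : IndepFun (U b) (fun ω => ∑ j ∈ t, U j ω) μ := by
        have h := indep_sums hUindep hUmeas (s := {b}) (t := t)
          (Finset.disjoint_singleton_left.mpr hb)
        rw [show U b = (fun ω => ∑ j ∈ ({b} : Finset ℕ), U j ω) from
          funext fun ω => by simp]
        exact h
      have sm := sum_moments hXY (fun k hk => hUint b k hk) ih.1
      have hre : ∀ k : ℕ, (fun ω => (∑ j ∈ Finset.cons b t hb, U j ω) ^ k)
          = fun ω => (U b ω + ∑ j ∈ t, U j ω) ^ k := by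
        intro k; funext ω; rw [Finset.sum_cons]
      have hcard : ((Finset.cons b t hb).card : ℝ) = (t.card : ℝ) + 1 := by
        rw [Finset.card_cons]; push_cast; ring
      refine ⟨fun k hk => ?_, ?_, ?_, ?_, ?_⟩
      · rw [hre k]; exact sm.1 k hk
      · rw [hre 1, sm.2.1, hUmom1 b, ih.2.1]; ring
      · rw [hre 2, sm.2.2.1, hUmom2 b, hUmom1 b, ih.2.1, ih.2.2.1, hcard]; ring
      · rw [hre 3, sm.2.2.2.1, hUmom3 b, hUmom2 b, hUmom1 b, ih.2.1, ih.2.2.1,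
          ih.2.2.2.1, hcard]; ring
      · rw [hre 4, sm.2.2.2.2.1, hUmom4 b, hUmom3 b, hUmom2 b, hUmom1 b, ih.2.1,
          ih.2.2.1, ih.2.2.2.1, ih.2.2.2.2, hcard]; ring
  have hcardIcc : ∀ i : ℕ, ((Icc 1 i).card : ℝ) = (i : ℝ) := by
    intro i; rw [Nat.card_Icc]; push_cast [Nat.add_sub_cancel]; ring
  -- covariance of squared partial sums
  have cov : ∀ i j : ℕ, 1 ≤ i → i ≤ j →
      Integrable (fun ω => (∑ k ∈ Icc 1 i, U k ω) ^ 2 * (∑ k ∈ Icc 1 j, U k ω) ^ 2) μ ∧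
      ∫ ω, (∑ k ∈ Icc 1 i, U k ω) ^ 2 * (∑ k ∈ Icc 1 j, U k ω) ^ 2 ∂μ
        = 8 * (i:ℝ)^2 + 48 * (i:ℝ) + 4 * (i:ℝ) * (j:ℝ) := by
    intro i j h1 h2
    have hdisj : Disjoint (Icc 1 i) (Ioc i j) := by
      rw [Finset.disjoint_left]
      intro x hx hx'
      simp only [Finset.mem_Icc] at hx
      simp only [Finset.mem_Ioc] at hx'
      omega
    have hunion : Icc 1 i ∪ Ioc i j = Icc 1 j := by
      ext x
      simp only [Finset.mem_union, Finset.mem_Icc, Finset.mem_Ioc]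
      omega
    have hsplit : ∀ ω, (∑ k ∈ Icc 1 j, U k ω)
        = (∑ k ∈ Icc 1 i, U k ω) + ∑ k ∈ Ioc i j, U k ω := by
      intro ω
      rw [← Finset.sum_union hdisj, hunion]
    have hXY := indep_sums hUindep hUmeas hdisj
    have sm := sum_moments hXY (key (Icc 1 i)).1 (key (Ioc i j)).1
    have hre : (fun ω => (∑ k ∈ Icc 1 i, U k ω) ^ 2 * (∑ k ∈ Icc 1 j, U k ω) ^ 2)
        = fun ω => (∑ k ∈ Icc 1 i, U k ω) ^ 2
            * ((∑ k ∈ Icc 1 i, U k ω) + ∑ k ∈ Ioc i j, U k ω) ^ 2 := by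
      funext ω; rw [hsplit ω]
    have hcardIoc : ((Ioc i j).card : ℝ) = (j:ℝ) - (i:ℝ) := by
      rw [Nat.card_Ioc]; push_cast [h2]; ring
    constructor
    · rw [hre]; exact sm.2.2.2.2.2.1
    · rw [hre, sm.2.2.2.2.2.2, (key (Icc 1 i)).2.2.2.2, (key (Ioc i j)).2.1,
        (key (Icc 1 i)).2.2.1, (key (Ioc i j)).2.2.1, hcardIcc, hcardIoc]
      ring
  -- Ubar moments
  have hB2 : ∀ i : ℕ, 1 ≤ i → ∫ ω, Ubar i ω ^ 2 ∂μ = 2 / (i:ℝ) := by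
    intro i hi
    have hi0 : (i:ℝ) ≠ 0 := Nat.cast_ne_zero.mpr (by omega)
    rw [show (fun ω => Ubar i ω ^ 2)
        = fun ω => (1/(i:ℝ))^2 * (∑ j ∈ Icc 1 i, U j ω)^2 from
      funext fun ω => by rw [hUbar i ω]; ring]
    rw [integral_const_mul, (key (Icc 1 i)).2.2.1, hcardIcc]
    field_simp
  have hB4 : ∀ i : ℕ, 1 ≤ i → ∫ ω, ((Ubar i ω) ^ 2) ^ 2 ∂μ
      = (1/(i:ℝ))^4 * (12 * (i:ℝ)^2 + 48 * (i:ℝ)) := by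
    intro i hi
    rw [show (fun ω => ((Ubar i ω) ^ 2) ^ 2)
        = fun ω => (1/(i:ℝ))^4 * (∑ j ∈ Icc 1 i, U j ω)^4 from
      funext fun ω => by rw [hUbar i ω]; ring]
    rw [integral_const_mul, (key (Icc 1 i)).2.2.2.2, hcardIcc]
  have hBij : ∀ i j : ℕ, 1 ≤ i → i ≤ j →
      ∫ ω, Ubar i ω ^ 2 * Ubar j ω ^ 2 ∂μ
        = (1/(i:ℝ))^2 * (1/(j:ℝ))^2 * (8*(i:ℝ)^2 + 48*(i:ℝ) + 4*(i:ℝ)*(j:ℝ)) := by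
    intro i j hi hij
    rw [show (fun ω => Ubar i ω ^ 2 * Ubar j ω ^ 2)
        = fun ω => (1/(i:ℝ))^2 * (1/(j:ℝ))^2
            * ((∑ k ∈ Icc 1 i, U k ω)^2 * (∑ k ∈ Icc 1 j, U k ω)^2) from
      funext fun ω => by rw [hUbar i ω, hUbar j ω]; ring]
    rw [integral_const_mul, (cov i j hi hij).2]
  refine ⟨?_, ?_, ?_⟩
  · -- conclusion 1
    intro i j hi hij
    have hi1 : 1 ≤ i := hi
    have hj1 : 1 ≤ j := le_trans hi (le_of_lt hij)
    have hi0 : (i:ℝ) ≠ 0 := Nat.cast_ne_zero.mpr (by omega)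
    have hj0 : (j:ℝ) ≠ 0 := Nat.cast_ne_zero.mpr (by omega)
    rw [hBij i j hi1 (le_of_lt hij), hB2 i hi1, hB2 j hj1, hB4 i hi1]
    field_simp
    ring
  · -- conclusion 2
    intro i hi
    have hi0 : (i:ℝ) ≠ 0 := Nat.cast_ne_zero.mpr (by omega)
    rw [hB4 i hi, hB2 i hi]
    field_simp
    ring
  · -- conclusion 3
    refine ⟨400, ?_⟩
    intro n hn
    have hIa : ∀ i : ℕ, 1 ≤ i → Integrable (fun ω => Ubar i ω ^ 2) μ := by
      intro i hi
      exact cast (((key (Icc 1 i)).1 2 (by norm_num)).const_mul ((1/(i:ℝ))^2))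
        (fun ω => by rw [hUbar i ω]; ring)
    have hIab : ∀ i j : ℕ, 1 ≤ i → 1 ≤ j →
        Integrable (fun ω => Ubar i ω ^ 2 * Ubar j ω ^ 2) μ := by
      intro i j hi hj
      rcases le_total i j with h | h
      · exact cast (((cov i j hi h).1).const_mul ((1/(i:ℝ))^2 * (1/(j:ℝ))^2))
          (fun ω => by rw [hUbar i ω, hUbar j ω]; ring)
      · exact cast (((cov j i hj h).1).const_mul ((1/(j:ℝ))^2 * (1/(i:ℝ))^2))
          (fun ω => by rw [hUbar i ω, hUbar j ω]; ring)
    have main_le : ∀ i j : ℕ, 1 ≤ i → i ≤ j →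
        (∫ ω, Ubar i ω ^ 2 * Ubar j ω ^ 2 ∂μ)
            - (∫ ω, Ubar i ω ^ 2 ∂μ) * (∫ ω, Ubar j ω ^ 2 ∂μ)
          ≤ 56 / (j:ℝ)^2 := by
      intro i j hi hij
      have hj1 : 1 ≤ j := le_trans hi hij
      have hi' : (1:ℝ) ≤ (i:ℝ) := by exact_mod_cast hi
      have hj' : (1:ℝ) ≤ (j:ℝ) := by exact_mod_cast hj1
      have hi0 : (i:ℝ) ≠ 0 := by linarith
      have hj0 : (j:ℝ) ≠ 0 := by linarith
      rw [hBij i j hi hij, hB2 i hi, hB2 j hj1]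
      have heq : (1/(i:ℝ))^2 * (1/(j:ℝ))^2 * (8*(i:ℝ)^2 + 48*(i:ℝ) + 4*(i:ℝ)*(j:ℝ))
          - 2/(i:ℝ) * (2/(j:ℝ))
          = (8*(i:ℝ)^2 + 48*(i:ℝ)) / ((i:ℝ)^2 * (j:ℝ)^2) := by
        field_simp
        ring
      rw [heq, div_le_div_iff₀ (by positivity) (by positivity)]
      nlinarith [sq_nonneg ((i:ℝ) - 1), sq_nonneg (j:ℝ), sq_nonneg (i:ℝ)]
    have cbound : ∀ i j : ℕ, 1 ≤ i → 1 ≤ j →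
        (∫ ω, Ubar i ω ^ 2 * Ubar j ω ^ 2 ∂μ)
            - (∫ ω, Ubar i ω ^ 2 ∂μ) * (∫ ω, Ubar j ω ^ 2 ∂μ)
          ≤ 56 / ((max j i : ℕ) : ℝ)^2 := by
      intro i j hi hj
      rcases le_total i j with h | h
      · rw [max_eq_left h]
        exact main_le i j hi h
      · rw [max_eq_right h,
          show ∫ ω, Ubar i ω ^ 2 * Ubar j ω ^ 2 ∂μ
            = ∫ ω, Ubar j ω ^ 2 * Ubar i ω ^ 2 ∂μ from by congr 1; funext ω; ring,
          mul_comm (∫ ω, Ubar i ω ^ 2 ∂μ) _]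
        exact main_le j i hj h
    have hmem : ∀ i : ℕ, i ∈ Icc 1 n → 1 ≤ i := fun i hi => (Finset.mem_Icc.mp hi).1
    have hsq : ∫ ω, (∑ i ∈ Icc 1 n, Ubar i ω ^ 2) ^ 2 ∂μ
        = ∑ i ∈ Icc 1 n, ∑ j ∈ Icc 1 n, ∫ ω, Ubar i ω ^ 2 * Ubar j ω ^ 2 ∂μ := by
      rw [show (fun ω => (∑ i ∈ Icc 1 n, Ubar i ω ^ 2) ^ 2)
          = fun ω => ∑ i ∈ Icc 1 n, ∑ j ∈ Icc 1 n, Ubar i ω ^ 2 * Ubar j ω ^ 2 from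
        funext fun ω => by rw [sq, Finset.sum_mul_sum]]
      rw [integral_finset_sum _ (fun i hi => integrable_finset_sum _
        (fun j hj => hIab i j (hmem i hi) (hmem j hj)))]
      refine Finset.sum_congr rfl fun i hi => ?_
      exact integral_finset_sum _ (fun j hj => hIab i j (hmem i hi) (hmem j hj))
    have hlin : ∫ ω, ∑ i ∈ Icc 1 n, Ubar i ω ^ 2 ∂μ
        = ∑ i ∈ Icc 1 n, ∫ ω, Ubar i ω ^ 2 ∂μ :=
      integral_finset_sum _ (fun i hi => hIa i (hmem i hi))
    have hexp : (∫ ω, (∑ i ∈ Icc 1 n, Ubar i ω ^ 2) ^ 2 ∂μ)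
        - (∫ ω, ∑ i ∈ Icc 1 n, Ubar i ω ^ 2 ∂μ) ^ 2
        = ∑ i ∈ Icc 1 n, ∑ j ∈ Icc 1 n,
            ((∫ ω, Ubar i ω ^ 2 * Ubar j ω ^ 2 ∂μ)
              - (∫ ω, Ubar i ω ^ 2 ∂μ) * (∫ ω, Ubar j ω ^ 2 ∂μ)) := by
      rw [hsq, hlin, sq, Finset.sum_mul_sum, ← Finset.sum_sub_distrib]
      exact Finset.sum_congr rfl fun i _ => (Finset.sum_sub_distrib _ _).symm
    rw [hexp]
    have step1 : ∀ i : ℕ, 1 ≤ i →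
        (∑ j ∈ Icc 1 n, ((∫ ω, Ubar i ω ^ 2 * Ubar j ω ^ 2 ∂μ)
          - (∫ ω, Ubar i ω ^ 2 ∂μ) * (∫ ω, Ubar j ω ^ 2 ∂μ)))
        ≤ 112 / (i:ℝ) := by
      intro i hi
      calc (∑ j ∈ Icc 1 n, ((∫ ω, Ubar i ω ^ 2 * Ubar j ω ^ 2 ∂μ)
            - (∫ ω, Ubar i ω ^ 2 ∂μ) * (∫ ω, Ubar j ω ^ 2 ∂μ)))
          ≤ ∑ j ∈ Icc 1 n, 56 / ((max j i : ℕ) : ℝ)^2 :=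
            Finset.sum_le_sum (fun j hj => cbound i j hi (hmem j hj))
        _ = 56 * ∑ j ∈ Icc 1 n, (1:ℝ) / ((max j i : ℕ) : ℝ)^2 := by
            rw [Finset.mul_sum]
            exact Finset.sum_congr rfl fun j _ => by ring
        _ ≤ 56 * (2 / (i:ℝ)) :=
            mul_le_mul_of_nonneg_left (sum_max_inv_sq' i hi n) (by norm_num)
        _ = 112 / (i:ℝ) := by ring
    calc (∑ i ∈ Icc 1 n, ∑ j ∈ Icc 1 n,
            ((∫ ω, Ubar i ω ^ 2 * Ubar j ω ^ 2 ∂μ)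
              - (∫ ω, Ubar i ω ^ 2 ∂μ) * (∫ ω, Ubar j ω ^ 2 ∂μ)))
        ≤ ∑ i ∈ Icc 1 n, 112 / (i:ℝ) :=
          Finset.sum_le_sum (fun i hi => step1 i (hmem i hi))
      _ = 112 * ∑ i ∈ Icc 1 n, (1:ℝ) / (i:ℝ) := by
          rw [Finset.mul_sum]
          exact Finset.sum_congr rfl fun i _ => by ring
      _ = 112 * (harmonic n : ℝ) := by rw [sum_inv_Icc_eq_harmonic]
      _ ≤ 112 * (1 + Real.log n) := by
          have := harmonic_le_one_add_log n
          linarith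
      _ ≤ 400 * Real.log n := by
          have hlog2 : (0.6931471803 : ℝ) < Real.log 2 := Real.log_two_gt_d9
          have hmono : Real.log 2 ≤ Real.log n := by
            apply Real.log_le_log (by norm_num)
            exact_mod_cast hn
          linarith
end
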